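/- arXiv:1608.01602 — 3 statements merged into one kernel-verified Lean document; each statement's English description precedes it below -/
import Mathlib

section
/- Fix n ≥ 1 and real numbers (V_k)_{k ∈ B_n} with V_{2k} + V_{2k+1} ≠ 0 for all 0 ≤ k ≤ 2^{n−1}−1 (so that V_ff is invertible). If both H_n and (RH)_{n−1} are invertible, then U* H_n^{−1} U = [[1, 0],[−V_ff^{−1}V_ef, 1]] · [[(RH)_{n−1}^{−1}, 0],[0, V_ff^{−1}]] · [[1, −V_fe V_ff^{−1}],[0, 1]] as block operators on ℓ²(B_{n−1}) ⊕ ℓ²(B_{n−1}). -/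
open MeasureTheory ProbabilityTheory Matrix Filter Topology

noncomputable section

/-- Hierarchical (ultrametric) distance on `ℕ₀ = {0,1,2,…}`:
`d(j,k) = min {r ≥ 0 | ⌊j/2^r⌋ = ⌊k/2^r⌋}`. -/
def hdist (j k : ℕ) : ℕ := sInf {r | j / 2 ^ r = k / 2 ^ r}

lemma hdist_comm (j k : ℕ) : hdist j k = hdist k j := by
  unfold hdist; congr 1; ext r; exact eq_comm

/-- Matrix entry of the hierarchical Laplacian `Δ = ∑_{r ≥ 1} p_r E_r`,
restricted to a block `B_n` (the entry only depends on the hierarchical distance):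
`Δ(j,k) = ∑_{r ≥ max(1, d(j,k))} p_r · 2^{-r}`. -/
def lapEntry (p : ℕ → ℝ) (j k : ℕ) : ℝ :=
  ∑' r : ℕ, if 1 ≤ r ∧ hdist j k ≤ r then p r / 2 ^ r else 0

/-- Matrix entry of the truncated Laplacian `∑_{r = 1}^{m} p_r E_r`. -/
def lapEntryT (p : ℕ → ℝ) (m : ℕ) (j k : ℕ) : ℝ :=
  ∑ r ∈ Finset.Icc 1 m, if hdist j k ≤ r then p r / 2 ^ r else 0

/-- The finite-volume Hamiltonian `H_n = 1_{B_n} (Δ + V) 1_{B_n}`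
as a real symmetric `2^n × 2^n` matrix. -/
def Hmat (p : ℕ → ℝ) (v : ℕ → ℝ) (n : ℕ) : Matrix (Fin (2 ^ n)) (Fin (2 ^ n)) ℝ :=
  fun j k => lapEntry p j k + if j = k then v j else 0

/-- The truncated finite-volume Hamiltonian
`H_{n,m} = 1_{B_n} (∑_{r=1}^m p_r E_r + V) 1_{B_n}`. -/
def HmatT (p : ℕ → ℝ) (v : ℕ → ℝ) (n m : ℕ) : Matrix (Fin (2 ^ n)) (Fin (2 ^ n)) ℝ :=
  fun j k => lapEntryT p m j k + if j = k then v j else 0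

lemma Hmat_isHermitian (p : ℕ → ℝ) (v : ℕ → ℝ) (n : ℕ) : (Hmat p v n).IsHermitian := by
  refine Matrix.ext fun j k => ?_
  simp only [conjTranspose_apply, star_trivial, Hmat, lapEntry, hdist_comm (k : ℕ) (j : ℕ)]
  rcases eq_or_ne j k with h | h
  · subst h; rfl
  · simp [h, h.symm]

lemma HmatT_isHermitian (p : ℕ → ℝ) (v : ℕ → ℝ) (n m : ℕ) : (HmatT p v n m).IsHermitian := by
  refine Matrix.ext fun j k => ?_
  simp only [conjTranspose_apply, star_trivial, HmatT, lapEntryT, hdist_comm (k : ℕ) (j : ℕ)]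
  rcases eq_or_ne j k with h | h
  · subst h; rfl
  · simp [h, h.symm]

/-- The site `0 ∈ B_n`. -/
def fin0 (n : ℕ) : Fin (2 ^ n) := ⟨0, Nat.two_pow_pos n⟩

/-- `2k ∈ B_{n+1}` for `k ∈ B_n`. -/
def dblFin {n : ℕ} (k : Fin (2 ^ n)) : Fin (2 ^ (n + 1)) :=
  ⟨2 * k, by have h := k.isLt; rw [pow_succ]; omega⟩

/-- `2k + 1 ∈ B_{n+1}` for `k ∈ B_n`. -/
def dblFin1 {n : ℕ} (k : Fin (2 ^ n)) : Fin (2 ^ (n + 1)) :=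
  ⟨2 * k + 1, by have h := k.isLt; rw [pow_succ]; omega⟩

/-- Hopping sequence `(p_{r+1})_{r ≥ 1}` of the renormalized model. -/
def shiftSeq (p : ℕ → ℝ) : ℕ → ℝ := fun r => p (r + 1)

/-- The renormalized potential `(RV)_k = 2 V_{2k} V_{2k+1}/(V_{2k} + V_{2k+1}) + p_1`. -/
def renPotM (p : ℕ → ℝ) (v : ℕ → ℝ) : ℕ → ℝ :=
  fun k => 2 * v (2 * k) * v (2 * k + 1) / (v (2 * k) + v (2 * k + 1)) + p 1

/-- The renormalized potential `(RV)_k = (1/(2 V_{2k}) + 1/(2 V_{2k+1}))⁻¹ + p_1`. -/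
def renPotH (p : ℕ → ℝ) (v : ℕ → ℝ) : ℕ → ℝ :=
  fun k => (1 / (2 * v (2 * k)) + 1 / (2 * v (2 * k + 1)))⁻¹ + p 1

/-- The isometry `U_e : ℓ²(B_n) → ℓ²(B_{n+1})`, `U_e δ_k = (δ_{2k} + δ_{2k+1})/√2`,
as a `2^{n+1} × 2^n` matrix. -/
def Uemat (n : ℕ) : Matrix (Fin (2 ^ (n + 1))) (Fin (2 ^ n)) ℝ :=
  fun j k => if (j : ℕ) = 2 * k then (Real.sqrt 2)⁻¹
    else if (j : ℕ) = 2 * k + 1 then (Real.sqrt 2)⁻¹ else 0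

/-- The isometry `U_f : ℓ²(B_n) → ℓ²(B_{n+1})`, `U_f δ_k = (δ_{2k} - δ_{2k+1})/√2`,
as a `2^{n+1} × 2^n` matrix. -/
def Ufmat (n : ℕ) : Matrix (Fin (2 ^ (n + 1))) (Fin (2 ^ n)) ℝ :=
  fun j k => if (j : ℕ) = 2 * k then (Real.sqrt 2)⁻¹
    else if (j : ℕ) = 2 * k + 1 then -(Real.sqrt 2)⁻¹ else 0

/-- The unitary `U = U_e ⊕ U_f : ℓ²(B_n) ⊕ ℓ²(B_n) → ℓ²(B_{n+1})`. -/
def Umat (n : ℕ) : Matrix (Fin (2 ^ (n + 1))) (Fin (2 ^ n) ⊕ Fin (2 ^ n)) ℝ :=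
  Matrix.fromCols (Uemat n) (Ufmat n)

/-- `V_ff = V_ee`: multiplication by `(V_{2k} + V_{2k+1})/2` on `ℓ²(B_n)`. -/
def Vffmat (v : ℕ → ℝ) (n : ℕ) : Matrix (Fin (2 ^ n)) (Fin (2 ^ n)) ℝ :=
  Matrix.diagonal fun k => (v (2 * k) + v (2 * k + 1)) / 2

/-- `V_fe = V_ef`: multiplication by `(V_{2k} - V_{2k+1})/2` on `ℓ²(B_n)`. -/
def Vfemat (v : ℕ → ℝ) (n : ℕ) : Matrix (Fin (2 ^ n)) (Fin (2 ^ n)) ℝ :=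
  Matrix.diagonal fun k => (v (2 * k) - v (2 * k + 1)) / 2

/-- The operator `S = U_e^* - V_fe V_ff^{-1} U_f^* : ℓ²(B_{n+1}) → ℓ²(B_n)`. -/
def Smat (v : ℕ → ℝ) (n : ℕ) : Matrix (Fin (2 ^ n)) (Fin (2 ^ (n + 1))) ℝ :=
  (Uemat n)ᵀ - Vfemat v n * (Vffmat v n)⁻¹ * (Ufmat n)ᵀ

/-- The maximally delocalized vector `φ_n = 2^{-n/2} 1_{B_n}`. -/
def phiVec (n : ℕ) : Fin (2 ^ n) → ℝ := fun _ => (Real.sqrt (2 ^ n))⁻¹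

end



noncomputable section SchurAux

/-! ### Auxiliary lemmas on the hierarchical distance -/

lemma hdist_set_nonempty (j k : ℕ) : {r | j / 2 ^ r = k / 2 ^ r}.Nonempty := by
  refine ⟨j + k, ?_⟩
  have hj : j < 2 ^ (j + k) :=
    lt_of_lt_of_le (Nat.lt_two_pow_self (n := j)) (Nat.pow_le_pow_right (by norm_num) (by omega))
  have hk : k < 2 ^ (j + k) :=
    lt_of_lt_of_le (Nat.lt_two_pow_self (n := k)) (Nat.pow_le_pow_right (by norm_num) (by omega))
  simp [Set.mem_setOf_eq, Nat.div_eq_of_lt hj, Nat.div_eq_of_lt hk]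

lemma hdist_self (j : ℕ) : hdist j j = 0 :=
  Nat.sInf_eq_zero.mpr (Or.inl rfl)

lemma hdist_pos (j k : ℕ) (h : j ≠ k) : 1 ≤ hdist j k := by
  rcases Nat.eq_zero_or_pos (hdist j k) with h0 | h1
  · exfalso
    rcases Nat.sInf_eq_zero.mp h0 with hm | he
    · simp only [Set.mem_setOf_eq, pow_zero, Nat.div_one] at hm; exact h hm
    · exact (hdist_set_nonempty j k).ne_empty he
  · exact h1

lemma div_two_pow_succ (j a r : ℕ) (ha : a < 2) : (2 * j + a) / 2 ^ (r + 1) = j / 2 ^ r := by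
  rw [pow_succ, mul_comm (2 ^ r) 2, ← Nat.div_div_eq_div_mul]
  congr 1
  omega

lemma hdist_dbl (j k a b : ℕ) (ha : a < 2) (hb : b < 2) (hjk : j ≠ k) :
    hdist (2 * j + a) (2 * k + b) = hdist j k + 1 := by
  have hmem : ∀ r, r ∈ {r | (2*j+a) / 2 ^ r = (2*k+b) / 2 ^ r} ↔
      ∃ s, r = s + 1 ∧ s ∈ {r | j / 2 ^ r = k / 2 ^ r} := by
    intro r
    cases r with
    | zero =>
      simp only [Set.mem_setOf_eq, pow_zero, Nat.div_one]
      constructor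
      · intro h; omega
      · rintro ⟨s, hs, _⟩; omega
    | succ s =>
      simp only [Set.mem_setOf_eq, div_two_pow_succ _ _ _ ha, div_two_pow_succ _ _ _ hb]
      constructor
      · intro h; exact ⟨s, rfl, h⟩
      · rintro ⟨s', hs', h⟩
        have : s' = s := by omega
        subst this; exact h
  unfold hdist
  apply le_antisymm
  · apply Nat.sInf_le
    rw [hmem]
    exact ⟨sInf {r | j / 2 ^ r = k / 2 ^ r}, rfl, Nat.sInf_mem (hdist_set_nonempty j k)⟩
  · have h0 := Nat.sInf_mem (hdist_set_nonempty (2*j+a) (2*k+b))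
    rw [hmem] at h0
    obtain ⟨s, hs, hmem'⟩ := h0
    have := Nat.sInf_le hmem'
    omega

lemma hdist_two_mul_add_one (j : ℕ) : hdist (2 * j) (2 * j + 1) = 1 := by
  unfold hdist
  apply le_antisymm
  · apply Nat.sInf_le
    show (2 * j) / 2 ^ 1 = (2 * j + 1) / 2 ^ 1
    omega
  · rcases Nat.eq_zero_or_pos (sInf {r | (2*j) / 2 ^ r = (2*j+1) / 2 ^ r}) with h0 | h1
    · exfalso
      rcases Nat.sInf_eq_zero.mp h0 with hm | he
      · simp only [Set.mem_setOf_eq, pow_zero, Nat.div_one] at hm; omega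
      · have : (1:ℕ) ∈ {r | (2*j) / 2 ^ r = (2*j+1) / 2 ^ r} := by
          show (2 * j) / 2 ^ 1 = (2 * j + 1) / 2 ^ 1; omega
        rw [he] at this; exact this
    · exact h1

/-! ### Tail sums of the Laplacian entries -/

/-- `Ttail p d = ∑_{r ≥ d} p_r / 2^r`. -/
def Ttail (p : ℕ → ℝ) (d : ℕ) : ℝ := ∑' r : ℕ, if d ≤ r then p r / 2 ^ r else 0

lemma summable_tail (p : ℕ → ℝ) (hps : Summable p) (f : ℕ → Prop) [DecidablePred f] :
    Summable (fun r => if f r then p r / 2 ^ r else 0) := by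
  apply Summable.of_norm_bounded hps.abs
  intro r
  rcases em (f r) with h | h
  · simp only [h, if_true]
    rw [Real.norm_eq_abs, abs_div, abs_of_nonneg (pow_nonneg (by norm_num : (0:ℝ) ≤ 2) r)]
    exact div_le_self (abs_nonneg _) (one_le_pow₀ (by norm_num))
  · simp [h]

lemma lapEntry_eq_Ttail (p : ℕ → ℝ) (j k : ℕ) :
    lapEntry p j k = Ttail p (max 1 (hdist j k)) := by
  unfold lapEntry Ttail
  refine tsum_congr fun r => ?_
  rcases le_or_gt (max 1 (hdist j k)) r with h | h
  · rw [if_pos (max_le_iff.mp h), if_pos h]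
  · rw [if_neg (fun hc => absurd (max_le_iff.mpr hc) (not_le.mpr h)), if_neg (not_le.mpr h)]

lemma Ttail_succ (p : ℕ → ℝ) (hps : Summable p) (d : ℕ) :
    Ttail p (d + 1) = (1 / 2) * Ttail (shiftSeq p) d := by
  unfold Ttail
  rw [Summable.tsum_eq_zero_add (summable_tail p hps _)]
  simp only [show ¬(d + 1 ≤ 0) by omega, if_false, zero_add, Nat.add_le_add_iff_right]
  rw [← tsum_mul_left (a := ((1:ℝ)/2)) (f := fun s => if d ≤ s then shiftSeq p s / 2 ^ s else 0)]
  exact tsum_congr fun s => by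
    rcases le_or_gt d s with h | h
    · simp only [if_pos h, shiftSeq, pow_succ]
      ring
    · simp [Nat.not_le.mpr h]

lemma two_Ttail_one (p : ℕ → ℝ) (hps : Summable p) :
    2 * Ttail p 1 = p 1 + Ttail (shiftSeq p) 1 := by
  have h1 : Ttail p 1 = Ttail p 2 + p 1 / 2 := by
    unfold Ttail
    have heq : ∀ r : ℕ, (if 1 ≤ r then p r / 2 ^ r else 0)
        = (if 2 ≤ r then p r / 2 ^ r else 0) + (if r = 1 then p 1 / 2 else 0) := by
      intro r
      match r with
      | 0 => norm_num
      | 1 => norm_num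
      | (n+2) => simp [Nat.le_add_left]
    rw [tsum_congr heq,
      Summable.tsum_add (summable_tail p hps _) ((hasSum_ite_eq 1 (p 1 / 2)).summable), tsum_ite_eq]
  have h2 := Ttail_succ p hps 1
  rw [h1]; rw [show (1:ℕ)+1 = 2 from rfl] at h2; rw [h2]; ring

lemma lapEntry_dbl (p : ℕ → ℝ) (hps : Summable p) (j k a b : ℕ) (ha : a < 2) (hb : b < 2) :
    lapEntry p (2 * j + a) (2 * k + b)
      = if j = k then Ttail p 1 else (1 / 2) * lapEntry (shiftSeq p) j k := by
  rcases eq_or_ne j k with hjk | hjk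
  · subst hjk
    rw [if_pos rfl, lapEntry_eq_Ttail]
    rcases eq_or_ne a b with hab | hab
    · subst hab
      rw [hdist_self, max_eq_left (Nat.zero_le 1)]
    · have h1 : hdist (2 * j + a) (2 * j + b) = 1 := by
        have hcase : (a = 0 ∧ b = 1) ∨ (a = 1 ∧ b = 0) := by omega
        rcases hcase with ⟨ha', hb'⟩ | ⟨ha', hb'⟩ <;> subst ha' <;> subst hb'
        · simpa using hdist_two_mul_add_one j
        · rw [hdist_comm]
          simpa using hdist_two_mul_add_one j
      rw [h1, max_self]
  · rw [if_neg hjk, lapEntry_eq_Ttail, hdist_dbl j k a b ha hb hjk,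
      lapEntry_eq_Ttail, max_eq_right (by have := hdist_pos j k hjk; omega),
      max_eq_right (hdist_pos j k hjk), Ttail_succ p hps]

lemma lapEntry_diag (q : ℕ → ℝ) (j : ℕ) : lapEntry q j j = Ttail q 1 := by
  rw [lapEntry_eq_Ttail, hdist_self, max_eq_left (Nat.zero_le 1)]

lemma lapEntry_dbl00 (p : ℕ → ℝ) (hps : Summable p) (j k : ℕ) :
    lapEntry p (2 * j) (2 * k)
      = if j = k then Ttail p 1 else (1 / 2) * lapEntry (shiftSeq p) j k := by
  simpa using lapEntry_dbl p hps j k 0 0 (by norm_num) (by norm_num)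

lemma lapEntry_dbl01 (p : ℕ → ℝ) (hps : Summable p) (j k : ℕ) :
    lapEntry p (2 * j) (2 * k + 1)
      = if j = k then Ttail p 1 else (1 / 2) * lapEntry (shiftSeq p) j k := by
  simpa using lapEntry_dbl p hps j k 0 1 (by norm_num) (by norm_num)

lemma lapEntry_dbl10 (p : ℕ → ℝ) (hps : Summable p) (j k : ℕ) :
    lapEntry p (2 * j + 1) (2 * k)
      = if j = k then Ttail p 1 else (1 / 2) * lapEntry (shiftSeq p) j k := by
  simpa using lapEntry_dbl p hps j k 1 0 (by norm_num) (by norm_num)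

lemma lapEntry_dbl11 (p : ℕ → ℝ) (hps : Summable p) (j k : ℕ) :
    lapEntry p (2 * j + 1) (2 * k + 1)
      = if j = k then Ttail p 1 else (1 / 2) * lapEntry (shiftSeq p) j k := by
  simpa using lapEntry_dbl p hps j k 1 1 (by norm_num) (by norm_num)

/-! ### Matrix computations with `Uemat` and `Ufmat` -/

lemma sqrt2_inv_mul_self : (Real.sqrt 2)⁻¹ * (Real.sqrt 2)⁻¹ = 1 / 2 := by
  rw [← mul_inv, Real.mul_self_sqrt (by norm_num)]
  norm_num

lemma dblFin_coe (n : ℕ) (k : Fin (2 ^ n)) : ((dblFin k : Fin (2 ^ (n + 1))) : ℕ) = 2 * k := rfl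
lemma dblFin1_coe (n : ℕ) (k : Fin (2 ^ n)) :
    ((dblFin1 k : Fin (2 ^ (n + 1))) : ℕ) = 2 * k + 1 := rfl

lemma dblFin_ne_dblFin1 (n : ℕ) (j k : Fin (2 ^ n)) : dblFin j ≠ dblFin1 k := by
  intro hc
  have h := congrArg Fin.val hc
  rw [dblFin_coe, dblFin1_coe] at h
  omega

lemma dblFin_inj (n : ℕ) (j k : Fin (2 ^ n)) (h : j ≠ k) : dblFin j ≠ dblFin k := by
  intro hc
  have hc' := congrArg Fin.val hc
  rw [dblFin_coe, dblFin_coe] at hc'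
  exact h (Fin.ext (by omega))

lemma dblFin1_inj (n : ℕ) (j k : Fin (2 ^ n)) (h : j ≠ k) : dblFin1 j ≠ dblFin1 k := by
  intro hc
  have hc' := congrArg Fin.val hc
  rw [dblFin1_coe, dblFin1_coe] at hc'
  exact h (Fin.ext (by omega))

lemma Ue_apply (n : ℕ) (l : Fin (2 ^ (n + 1))) (k : Fin (2 ^ n)) :
    Uemat n l k = (Real.sqrt 2)⁻¹ *
      ((if l = dblFin k then 1 else 0) + (if l = dblFin1 k then 1 else 0)) := by
  unfold Uemat
  rcases eq_or_ne l (dblFin k) with hA | hA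
  · rw [hA, if_pos (dblFin_coe n k), if_pos rfl, if_neg (dblFin_ne_dblFin1 n k k)]
    ring
  · rcases eq_or_ne l (dblFin1 k) with hB | hB
    · have hne : ¬((l : ℕ) = 2 * k) := by rw [hB, dblFin1_coe]; omega
      rw [if_neg hne, if_pos (show (l : ℕ) = 2 * k + 1 by rw [hB, dblFin1_coe]),
        if_neg hA, if_pos hB]
      ring
    · have h1 : ¬((l : ℕ) = 2 * k) := fun hc => hA (Fin.ext (by rw [dblFin_coe]; exact hc))
      have h2 : ¬((l : ℕ) = 2 * k + 1) := fun hc => hB (Fin.ext (by rw [dblFin1_coe]; exact hc))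
      rw [if_neg h1, if_neg h2, if_neg hA, if_neg hB]
      ring

lemma Uf_apply (n : ℕ) (l : Fin (2 ^ (n + 1))) (k : Fin (2 ^ n)) :
    Ufmat n l k = (Real.sqrt 2)⁻¹ *
      ((if l = dblFin k then 1 else 0) - (if l = dblFin1 k then 1 else 0)) := by
  unfold Ufmat
  rcases eq_or_ne l (dblFin k) with hA | hA
  · rw [hA, if_pos (dblFin_coe n k), if_pos rfl, if_neg (dblFin_ne_dblFin1 n k k)]
    ring
  · rcases eq_or_ne l (dblFin1 k) with hB | hB
    · have hne : ¬((l : ℕ) = 2 * k) := by rw [hB, dblFin1_coe]; omega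
      rw [if_neg hne, if_pos (show (l : ℕ) = 2 * k + 1 by rw [hB, dblFin1_coe]),
        if_neg hA, if_pos hB]
      ring
    · have h1 : ¬((l : ℕ) = 2 * k) := fun hc => hA (Fin.ext (by rw [dblFin_coe]; exact hc))
      have h2 : ¬((l : ℕ) = 2 * k + 1) := fun hc => hB (Fin.ext (by rw [dblFin1_coe]; exact hc))
      rw [if_neg h1, if_neg h2, if_neg hA, if_neg hB]
      ring

lemma Ue_vec (n : ℕ) (g : Fin (2 ^ (n + 1)) → ℝ) (k : Fin (2 ^ n)) :
    ∑ m, Uemat n m k * g m = (Real.sqrt 2)⁻¹ * (g (dblFin k) + g (dblFin1 k)) := by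
  simp only [Ue_apply, mul_assoc, add_mul, ite_mul, one_mul, zero_mul,
    ← Finset.mul_sum, Finset.sum_add_distrib, Finset.sum_ite_eq', Finset.mem_univ, if_true]

lemma Uf_vec (n : ℕ) (g : Fin (2 ^ (n + 1)) → ℝ) (k : Fin (2 ^ n)) :
    ∑ m, Ufmat n m k * g m = (Real.sqrt 2)⁻¹ * (g (dblFin k) - g (dblFin1 k)) := by
  simp only [Uf_apply, mul_assoc, sub_mul, ite_mul, one_mul, zero_mul,
    ← Finset.mul_sum, Finset.sum_sub_distrib, Finset.sum_ite_eq', Finset.mem_univ, if_true]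

lemma conj_ee (n : ℕ) (M : Matrix (Fin (2 ^ (n + 1))) (Fin (2 ^ (n + 1))) ℝ)
    (j k : Fin (2 ^ n)) :
    ((Uemat n)ᵀ * M * Uemat n) j k
      = (M (dblFin j) (dblFin k) + M (dblFin j) (dblFin1 k)
        + M (dblFin1 j) (dblFin k) + M (dblFin1 j) (dblFin1 k)) / 2 := by
  have h1 : ∀ l, ((Uemat n)ᵀ * M) j l
      = (Real.sqrt 2)⁻¹ * (M (dblFin j) l + M (dblFin1 j) l) := by
    intro l
    rw [Matrix.mul_apply]
    simp only [Matrix.transpose_apply]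
    exact Ue_vec n (fun m => M m l) j
  rw [Matrix.mul_apply,
    Finset.sum_congr rfl fun l _ => mul_comm (((Uemat n)ᵀ * M) j l) (Uemat n l k),
    Ue_vec n (fun l => ((Uemat n)ᵀ * M) j l) k, h1, h1,
    show ∀ x y : ℝ, (Real.sqrt 2)⁻¹ * ((Real.sqrt 2)⁻¹ * x + (Real.sqrt 2)⁻¹ * y)
      = ((Real.sqrt 2)⁻¹ * (Real.sqrt 2)⁻¹) * (x + y) from fun x y => by ring,
    sqrt2_inv_mul_self]
  ring

lemma conj_ef (n : ℕ) (M : Matrix (Fin (2 ^ (n + 1))) (Fin (2 ^ (n + 1))) ℝ)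
    (j k : Fin (2 ^ n)) :
    ((Uemat n)ᵀ * M * Ufmat n) j k
      = (M (dblFin j) (dblFin k) - M (dblFin j) (dblFin1 k)
        + M (dblFin1 j) (dblFin k) - M (dblFin1 j) (dblFin1 k)) / 2 := by
  have h1 : ∀ l, ((Uemat n)ᵀ * M) j l
      = (Real.sqrt 2)⁻¹ * (M (dblFin j) l + M (dblFin1 j) l) := by
    intro l
    rw [Matrix.mul_apply]
    simp only [Matrix.transpose_apply]
    exact Ue_vec n (fun m => M m l) j
  rw [Matrix.mul_apply,
    Finset.sum_congr rfl fun l _ => mul_comm (((Uemat n)ᵀ * M) j l) (Ufmat n l k),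
    Uf_vec n (fun l => ((Uemat n)ᵀ * M) j l) k, h1, h1,
    show ∀ x y : ℝ, (Real.sqrt 2)⁻¹ * ((Real.sqrt 2)⁻¹ * x - (Real.sqrt 2)⁻¹ * y)
      = ((Real.sqrt 2)⁻¹ * (Real.sqrt 2)⁻¹) * (x - y) from fun x y => by ring,
    sqrt2_inv_mul_self]
  ring

lemma conj_fe (n : ℕ) (M : Matrix (Fin (2 ^ (n + 1))) (Fin (2 ^ (n + 1))) ℝ)
    (j k : Fin (2 ^ n)) :
    ((Ufmat n)ᵀ * M * Uemat n) j k
      = (M (dblFin j) (dblFin k) + M (dblFin j) (dblFin1 k)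
        - M (dblFin1 j) (dblFin k) - M (dblFin1 j) (dblFin1 k)) / 2 := by
  have h1 : ∀ l, ((Ufmat n)ᵀ * M) j l
      = (Real.sqrt 2)⁻¹ * (M (dblFin j) l - M (dblFin1 j) l) := by
    intro l
    rw [Matrix.mul_apply]
    simp only [Matrix.transpose_apply]
    exact Uf_vec n (fun m => M m l) j
  rw [Matrix.mul_apply,
    Finset.sum_congr rfl fun l _ => mul_comm (((Ufmat n)ᵀ * M) j l) (Uemat n l k),
    Ue_vec n (fun l => ((Ufmat n)ᵀ * M) j l) k, h1, h1,
    show ∀ x y : ℝ, (Real.sqrt 2)⁻¹ * ((Real.sqrt 2)⁻¹ * x + (Real.sqrt 2)⁻¹ * y)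
      = ((Real.sqrt 2)⁻¹ * (Real.sqrt 2)⁻¹) * (x + y) from fun x y => by ring,
    sqrt2_inv_mul_self]
  ring

lemma conj_ff (n : ℕ) (M : Matrix (Fin (2 ^ (n + 1))) (Fin (2 ^ (n + 1))) ℝ)
    (j k : Fin (2 ^ n)) :
    ((Ufmat n)ᵀ * M * Ufmat n) j k
      = (M (dblFin j) (dblFin k) - M (dblFin j) (dblFin1 k)
        - M (dblFin1 j) (dblFin k) + M (dblFin1 j) (dblFin1 k)) / 2 := by
  have h1 : ∀ l, ((Ufmat n)ᵀ * M) j l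
      = (Real.sqrt 2)⁻¹ * (M (dblFin j) l - M (dblFin1 j) l) := by
    intro l
    rw [Matrix.mul_apply]
    simp only [Matrix.transpose_apply]
    exact Uf_vec n (fun m => M m l) j
  rw [Matrix.mul_apply,
    Finset.sum_congr rfl fun l _ => mul_comm (((Ufmat n)ᵀ * M) j l) (Ufmat n l k),
    Uf_vec n (fun l => ((Ufmat n)ᵀ * M) j l) k, h1, h1,
    show ∀ x y : ℝ, (Real.sqrt 2)⁻¹ * ((Real.sqrt 2)⁻¹ * x - (Real.sqrt 2)⁻¹ * y)
      = ((Real.sqrt 2)⁻¹ * (Real.sqrt 2)⁻¹) * (x - y) from fun x y => by ring,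
    sqrt2_inv_mul_self]
  ring

lemma Ue_at_dbl (n : ℕ) (k j : Fin (2 ^ n)) :
    Uemat n (dblFin k) j = if j = k then (Real.sqrt 2)⁻¹ else 0 := by
  rw [Ue_apply]
  rcases eq_or_ne j k with h | h
  · subst h
    rw [if_pos rfl, if_pos rfl, if_neg (dblFin_ne_dblFin1 n j j)]
    ring
  · rw [if_neg h, if_neg (dblFin_inj n k j (Ne.symm h)), if_neg (dblFin_ne_dblFin1 n k j)]
    ring

lemma Ue_at_dbl1 (n : ℕ) (k j : Fin (2 ^ n)) :
    Uemat n (dblFin1 k) j = if j = k then (Real.sqrt 2)⁻¹ else 0 := by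
  rw [Ue_apply]
  rcases eq_or_ne j k with h | h
  · subst h
    rw [if_pos rfl, if_pos rfl, if_neg (Ne.symm (dblFin_ne_dblFin1 n j j))]
    ring
  · rw [if_neg h, if_neg (Ne.symm (dblFin_ne_dblFin1 n j k)), if_neg (dblFin1_inj n k j (Ne.symm h))]
    ring

lemma Uf_at_dbl (n : ℕ) (k j : Fin (2 ^ n)) :
    Ufmat n (dblFin k) j = if j = k then (Real.sqrt 2)⁻¹ else 0 := by
  rw [Uf_apply]
  rcases eq_or_ne j k with h | h
  · subst h
    rw [if_pos rfl, if_pos rfl, if_neg (dblFin_ne_dblFin1 n j j)]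
    ring
  · rw [if_neg h, if_neg (dblFin_inj n k j (Ne.symm h)), if_neg (dblFin_ne_dblFin1 n k j)]
    ring

lemma Uf_at_dbl1 (n : ℕ) (k j : Fin (2 ^ n)) :
    Ufmat n (dblFin1 k) j = if j = k then -(Real.sqrt 2)⁻¹ else 0 := by
  rw [Uf_apply]
  rcases eq_or_ne j k with h | h
  · subst h
    rw [if_pos rfl, if_pos rfl, if_neg (Ne.symm (dblFin_ne_dblFin1 n j j))]
    ring
  · rw [if_neg h, if_neg (Ne.symm (dblFin_ne_dblFin1 n j k)), if_neg (dblFin1_inj n k j (Ne.symm h))]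
    ring

lemma conjT_eq_transpose {α β : Type*} (A : Matrix α β ℝ) : Aᴴ = Aᵀ :=
  Matrix.ext fun i j => by simp [Matrix.conjTranspose_apply]

lemma Umat_conjT (n : ℕ) :
    (Umat n)ᴴ = Matrix.fromRows (Uemat n)ᵀ (Ufmat n)ᵀ := by
  unfold Umat
  rw [Matrix.conjTranspose_fromCols_eq_fromRows_conjTranspose,
    conjT_eq_transpose, conjT_eq_transpose]

lemma UtU_eq_one (n : ℕ) : (Umat n)ᴴ * Umat n = 1 := by
  rw [Umat_conjT]
  unfold Umat
  rw [Matrix.fromRows_mul_fromCols]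
  have hee : (Uemat n)ᵀ * Uemat n = (1 : Matrix (Fin (2 ^ n)) (Fin (2 ^ n)) ℝ) := by
    ext j k
    rw [Matrix.mul_apply,
      Finset.sum_congr rfl fun l _ =>
        (by rw [Matrix.transpose_apply]; ring :
          (Uemat n)ᵀ j l * Uemat n l k = Uemat n l k * Uemat n l j),
      Ue_vec n (fun m => Uemat n m j) k, Ue_at_dbl, Ue_at_dbl1]
    rcases eq_or_ne j k with h | h
    · subst h
      rw [if_pos rfl, Matrix.one_apply_eq,
        show (Real.sqrt 2)⁻¹ * ((Real.sqrt 2)⁻¹ + (Real.sqrt 2)⁻¹)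
          = 2 * ((Real.sqrt 2)⁻¹ * (Real.sqrt 2)⁻¹) from by ring, sqrt2_inv_mul_self]
      norm_num
    · rw [if_neg h, Matrix.one_apply_ne h]
      ring
  have hef : (Uemat n)ᵀ * Ufmat n = (0 : Matrix (Fin (2 ^ n)) (Fin (2 ^ n)) ℝ) := by
    ext j k
    rw [Matrix.mul_apply,
      Finset.sum_congr rfl fun l _ =>
        (by rw [Matrix.transpose_apply]; ring :
          (Uemat n)ᵀ j l * Ufmat n l k = Ufmat n l k * Uemat n l j),
      Uf_vec n (fun m => Uemat n m j) k, Ue_at_dbl, Ue_at_dbl1]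
    rcases eq_or_ne j k with h | h <;> simp [h]
  have hfe : (Ufmat n)ᵀ * Uemat n = (0 : Matrix (Fin (2 ^ n)) (Fin (2 ^ n)) ℝ) := by
    ext j k
    rw [Matrix.mul_apply,
      Finset.sum_congr rfl fun l _ =>
        (by rw [Matrix.transpose_apply]; ring :
          (Ufmat n)ᵀ j l * Uemat n l k = Uemat n l k * Ufmat n l j),
      Ue_vec n (fun m => Ufmat n m j) k, Uf_at_dbl, Uf_at_dbl1]
    rcases eq_or_ne j k with h | h <;> simp [h]
  have hff : (Ufmat n)ᵀ * Ufmat n = (1 : Matrix (Fin (2 ^ n)) (Fin (2 ^ n)) ℝ) := by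
    ext j k
    rw [Matrix.mul_apply,
      Finset.sum_congr rfl fun l _ =>
        (by rw [Matrix.transpose_apply]; ring :
          (Ufmat n)ᵀ j l * Ufmat n l k = Ufmat n l k * Ufmat n l j),
      Uf_vec n (fun m => Ufmat n m j) k, Uf_at_dbl, Uf_at_dbl1]
    rcases eq_or_ne j k with h | h
    · subst h
      rw [if_pos rfl, if_pos rfl, Matrix.one_apply_eq,
        show (Real.sqrt 2)⁻¹ * ((Real.sqrt 2)⁻¹ - -(Real.sqrt 2)⁻¹)
          = 2 * ((Real.sqrt 2)⁻¹ * (Real.sqrt 2)⁻¹) from by ring, sqrt2_inv_mul_self]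
      norm_num
    · rw [if_neg h, if_neg h, Matrix.one_apply_ne h]
      ring
  rw [hee, hef, hfe, hff, Matrix.fromBlocks_one]

lemma UUt_eq_one (n : ℕ) : Umat n * (Umat n)ᴴ = 1 := by
  have e : (Fin (2 ^ n) ⊕ Fin (2 ^ n)) ≃ Fin (2 ^ (n + 1)) :=
    finSumFinEquiv.trans (finCongr (by rw [pow_succ]; ring))
  have h1 : ((Umat n)ᴴ.submatrix (⇑e.symm) id) * ((Umat n).submatrix id ⇑e.symm) = 1 := by
    have h := Matrix.submatrix_mul_equiv ((Umat n)ᴴ) (Umat n) (⇑e.symm) (Equiv.refl _) (⇑e.symm)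
    simp only [Equiv.coe_refl] at h
    rw [h, UtU_eq_one, Matrix.submatrix_one_equiv e.symm]
  have h2 := mul_eq_one_comm.mp h1
  have h3 := Matrix.submatrix_mul_equiv (Umat n) ((Umat n)ᴴ) (id) e.symm (id)
  calc Umat n * (Umat n)ᴴ
      = (Umat n * (Umat n)ᴴ).submatrix id id := (Matrix.submatrix_id_id _).symm
    _ = (Umat n).submatrix id ⇑e.symm * (Umat n)ᴴ.submatrix (⇑e.symm) id := h3.symm
    _ = 1 := h2

lemma Vff_det_isUnit (v : ℕ → ℝ) (n : ℕ)
    (hv : ∀ k : ℕ, k < 2 ^ n → v (2 * k) + v (2 * k + 1) ≠ 0) :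
    IsUnit (Vffmat v n).det := by
  unfold Vffmat
  rw [Matrix.det_diagonal, isUnit_iff_ne_zero]
  refine Finset.prod_ne_zero_iff.mpr fun k _ => ?_
  have := hv k k.isLt
  intro hc
  apply this
  linarith

lemma Vff_inv (v : ℕ → ℝ) (n : ℕ)
    (hv : ∀ k : ℕ, k < 2 ^ n → v (2 * k) + v (2 * k + 1) ≠ 0) :
    (Vffmat v n)⁻¹
      = Matrix.diagonal (fun k : Fin (2 ^ n) => ((v (2 * k) + v (2 * k + 1)) / 2)⁻¹) := by
  apply Matrix.inv_eq_right_inv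
  unfold Vffmat
  rw [Matrix.diagonal_mul_diagonal, ← Matrix.diagonal_one]
  have hfun : (fun k : Fin (2 ^ n) =>
      (v (2 * (k : ℕ)) + v (2 * (k : ℕ) + 1)) / 2 * ((v (2 * (k : ℕ)) + v (2 * (k : ℕ) + 1)) / 2)⁻¹)
      = fun _ => (1 : ℝ) := by
    funext k
    have h := hv k k.isLt
    exact mul_inv_cancel₀ (by intro hc; apply h; linarith)
  rw [hfun]

/-- The key block-diagonalization identity `U* H U = [[RH + F W⁻¹ F, F],[F, W]]`. -/
lemma conj_H (n : ℕ) (p : ℕ → ℝ) (hps : Summable p) (v : ℕ → ℝ)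
    (hv : ∀ k : ℕ, k < 2 ^ n → v (2 * k) + v (2 * k + 1) ≠ 0) :
    (Umat n)ᴴ * Hmat p v (n + 1) * Umat n =
      Matrix.fromBlocks
        (Hmat (shiftSeq p) (renPotM p v) n + Vfemat v n * (Vffmat v n)⁻¹ * Vfemat v n)
        (Vfemat v n) (Vfemat v n) (Vffmat v n) := by
  have hD : Vfemat v n * (Vffmat v n)⁻¹ * Vfemat v n
      = Matrix.diagonal (fun k : Fin (2 ^ n) =>
          (v (2*k) - v (2*k+1)) / 2 * ((v (2*k) + v (2*k+1)) / 2)⁻¹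
            * ((v (2*k) - v (2*k+1)) / 2)) := by
    rw [Vff_inv v n hv]
    unfold Vfemat
    rw [Matrix.diagonal_mul_diagonal, Matrix.diagonal_mul_diagonal]
  have hT : Ttail p 1 = (p 1 + Ttail (shiftSeq p) 1) / 2 := by
    have := two_Ttail_one p hps
    linarith
  have hee : (Uemat n)ᵀ * Hmat p v (n + 1) * Uemat n
      = Hmat (shiftSeq p) (renPotM p v) n + Vfemat v n * (Vffmat v n)⁻¹ * Vfemat v n := by
    ext j k
    rw [conj_ee, hD]
    simp only [Matrix.add_apply, Hmat, Matrix.diagonal_apply, dblFin_coe, dblFin1_coe,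
      lapEntry_dbl00 p hps, lapEntry_dbl01 p hps, lapEntry_dbl10 p hps, lapEntry_dbl11 p hps]
    rcases eq_or_ne j k with h | h
    · subst h
      have hjj : ((j : ℕ) = (j : ℕ)) := rfl
      simp only [if_pos rfl, if_pos hjj, dblFin_ne_dblFin1 n j j, if_false,
        Ne.symm (dblFin_ne_dblFin1 n j j), dblFin_coe, dblFin1_coe]
      rw [lapEntry_diag, renPotM, hT]
      simp only [↓reduceIte]
      have hab := hv j j.isLt
      field_simp
      ring
    · have hjk : ((j : ℕ) ≠ (k : ℕ)) := fun hc => h (Fin.ext hc)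
      simp only [if_neg hjk, if_neg h, if_neg (dblFin_inj n j k h),
        if_neg (dblFin_ne_dblFin1 n j k), if_neg (Ne.symm (dblFin_ne_dblFin1 n k j)),
        if_neg (dblFin1_inj n j k h)]
      ring
  have hef : (Uemat n)ᵀ * Hmat p v (n + 1) * Ufmat n = Vfemat v n := by
    ext j k
    rw [conj_ef]
    simp only [Vfemat, Hmat, Matrix.diagonal_apply, dblFin_coe, dblFin1_coe,
      lapEntry_dbl00 p hps, lapEntry_dbl01 p hps, lapEntry_dbl10 p hps, lapEntry_dbl11 p hps]
    rcases eq_or_ne j k with h | h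
    · subst h
      simp only [if_pos rfl, dblFin_ne_dblFin1 n j j, if_false,
        Ne.symm (dblFin_ne_dblFin1 n j j), dblFin_coe, dblFin1_coe]
      simp only [if_true, eq_self_iff_true]
      ring
    · have hjk : ((j : ℕ) ≠ (k : ℕ)) := fun hc => h (Fin.ext hc)
      simp only [if_neg hjk, if_neg h, if_neg (dblFin_inj n j k h),
        if_neg (dblFin_ne_dblFin1 n j k), if_neg (Ne.symm (dblFin_ne_dblFin1 n k j)),
        if_neg (dblFin1_inj n j k h)]
      ring
  have hfe : (Ufmat n)ᵀ * Hmat p v (n + 1) * Uemat n = Vfemat v n := by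
    ext j k
    rw [conj_fe]
    simp only [Vfemat, Hmat, Matrix.diagonal_apply, dblFin_coe, dblFin1_coe,
      lapEntry_dbl00 p hps, lapEntry_dbl01 p hps, lapEntry_dbl10 p hps, lapEntry_dbl11 p hps]
    rcases eq_or_ne j k with h | h
    · subst h
      simp only [if_pos rfl, dblFin_ne_dblFin1 n j j, if_false,
        Ne.symm (dblFin_ne_dblFin1 n j j), dblFin_coe, dblFin1_coe]
      simp only [if_true, eq_self_iff_true]
      ring
    · have hjk : ((j : ℕ) ≠ (k : ℕ)) := fun hc => h (Fin.ext hc)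
      simp only [if_neg hjk, if_neg h, if_neg (dblFin_inj n j k h),
        if_neg (dblFin_ne_dblFin1 n j k), if_neg (Ne.symm (dblFin_ne_dblFin1 n k j)),
        if_neg (dblFin1_inj n j k h)]
      ring
  have hff : (Ufmat n)ᵀ * Hmat p v (n + 1) * Ufmat n = Vffmat v n := by
    ext j k
    rw [conj_ff]
    simp only [Vffmat, Hmat, Matrix.diagonal_apply, dblFin_coe, dblFin1_coe,
      lapEntry_dbl00 p hps, lapEntry_dbl01 p hps, lapEntry_dbl10 p hps, lapEntry_dbl11 p hps]
    rcases eq_or_ne j k with h | h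
    · subst h
      simp only [if_pos rfl, dblFin_ne_dblFin1 n j j, if_false,
        Ne.symm (dblFin_ne_dblFin1 n j j), dblFin_coe, dblFin1_coe]
      simp only [if_true, eq_self_iff_true]
      ring
    · have hjk : ((j : ℕ) ≠ (k : ℕ)) := fun hc => h (Fin.ext hc)
      simp only [if_neg hjk, if_neg h, if_neg (dblFin_inj n j k h),
        if_neg (dblFin_ne_dblFin1 n j k), if_neg (Ne.symm (dblFin_ne_dblFin1 n k j)),
        if_neg (dblFin1_inj n j k h)]
      ring
  rw [Umat_conjT]
  unfold Umat
  rw [Matrix.fromRows_mul, Matrix.fromRows_mul_fromCols, hee, hef, hfe, hff]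

end SchurAux

/-- **Schur complement block decomposition** (Proposition in Section 3): for `n ≥ 1`
(written `n+1` here), if `V_{2k} + V_{2k+1} ≠ 0` for all `k`, and `H_{n+1}` and `(RH)_n`
are invertible, then
`U* H_{n+1}^{-1} U = [[1,0],[-V_ff⁻¹ V_ef,1]] · [[(RH)_n⁻¹,0],[0,V_ff⁻¹]] · [[1,-V_fe V_ff⁻¹],[0,1]]`. -/
theorem schur_block_decomposition (n : ℕ) (p : ℕ → ℝ) (hps : Summable p) (v : ℕ → ℝ)
    (hv : ∀ k : ℕ, k < 2 ^ n → v (2 * k) + v (2 * k + 1) ≠ 0)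
    (hH : IsUnit (Hmat p v (n + 1)).det)
    (hRH : IsUnit (Hmat (shiftSeq p) (renPotM p v) n).det) :
    (Umat n)ᴴ * (Hmat p v (n + 1))⁻¹ * Umat n =
      Matrix.fromBlocks 1 0 (-((Vffmat v n)⁻¹ * Vfemat v n)) 1 *
        Matrix.fromBlocks (Hmat (shiftSeq p) (renPotM p v) n)⁻¹ 0 0 (Vffmat v n)⁻¹ *
        Matrix.fromBlocks 1 (-(Vfemat v n * (Vffmat v n)⁻¹)) 0 1 := by
  classical
  set H := Hmat p v (n + 1) with hHdef
  set U := Umat n with hUdef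
  set S := Hmat (shiftSeq p) (renPotM p v) n with hSdef
  set F := Vfemat v n with hFdef
  set W := Vffmat v n with hWdef
  have hWdet : IsUnit W.det := Vff_det_isUnit v n hv
  have hWW : W⁻¹ * W = 1 := Matrix.nonsing_inv_mul _ hWdet
  have hSS : S⁻¹ * S = 1 := Matrix.nonsing_inv_mul _ hRH
  have hHH : H * H⁻¹ = 1 := Matrix.mul_nonsing_inv _ hH
  have hUtU : Uᴴ * U = 1 := UtU_eq_one n
  have hUUt : U * Uᴴ = 1 := UUt_eq_one n
  have hA : Uᴴ * H * U = Matrix.fromBlocks (S + F * W⁻¹ * F) F F W := conj_H n p hps v hv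
  have hstep1 : Matrix.fromBlocks 1 (-(F * W⁻¹)) 0 1 * Matrix.fromBlocks (S + F * W⁻¹ * F) F F W
      = Matrix.fromBlocks S 0 F W := by
    rw [Matrix.fromBlocks_multiply, Matrix.fromBlocks_inj]
    refine ⟨?_, ?_, ?_, ?_⟩
    · rw [Matrix.one_mul, Matrix.neg_mul]
      abel
    · rw [Matrix.one_mul, Matrix.neg_mul, Matrix.mul_assoc, hWW, Matrix.mul_one]
      abel
    · rw [Matrix.zero_mul, Matrix.one_mul, zero_add]
    · rw [Matrix.zero_mul, Matrix.one_mul, zero_add]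
  have hstep2 : Matrix.fromBlocks S⁻¹ 0 0 W⁻¹ * Matrix.fromBlocks S 0 F W
      = Matrix.fromBlocks 1 0 (W⁻¹ * F) 1 := by
    rw [Matrix.fromBlocks_multiply, Matrix.fromBlocks_inj]
    refine ⟨?_, ?_, ?_, ?_⟩ <;>
      simp only [Matrix.zero_mul, Matrix.mul_zero, add_zero, zero_add, hSS, hWW]
  have hstep3 : Matrix.fromBlocks 1 0 (-(W⁻¹ * F)) 1 * Matrix.fromBlocks 1 0 (W⁻¹ * F) 1
      = (1 : Matrix (Fin (2 ^ n) ⊕ Fin (2 ^ n)) (Fin (2 ^ n) ⊕ Fin (2 ^ n)) ℝ) := by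
    rw [Matrix.fromBlocks_multiply, ← Matrix.fromBlocks_one, Matrix.fromBlocks_inj]
    refine ⟨?_, ?_, ?_, ?_⟩ <;>
      simp only [Matrix.one_mul, Matrix.mul_one, Matrix.zero_mul, Matrix.mul_zero,
        add_zero, zero_add, neg_add_cancel]
  have hLeftInv :
      (Matrix.fromBlocks 1 0 (-(W⁻¹ * F)) 1 * Matrix.fromBlocks S⁻¹ 0 0 W⁻¹ *
        Matrix.fromBlocks 1 (-(F * W⁻¹)) 0 1) * (Uᴴ * H * U) = 1 := by
    rw [hA, Matrix.mul_assoc, Matrix.mul_assoc, hstep1, hstep2]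
    exact hstep3
  have hRightInv : (Uᴴ * H * U) * (Uᴴ * H⁻¹ * U) = 1 := by
    calc (Uᴴ * H * U) * (Uᴴ * H⁻¹ * U)
        = Uᴴ * (H * ((U * Uᴴ) * (H⁻¹ * U))) := by
          simp only [Matrix.mul_assoc]
      _ = Uᴴ * ((H * H⁻¹) * U) := by rw [hUUt, Matrix.one_mul, Matrix.mul_assoc]
      _ = Uᴴ * U := by rw [hHH, Matrix.one_mul]
      _ = 1 := hUtU
  calc Uᴴ * H⁻¹ * U
      = 1 * (Uᴴ * H⁻¹ * U) := (Matrix.one_mul _).symm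
    _ = (Matrix.fromBlocks 1 0 (-(W⁻¹ * F)) 1 * Matrix.fromBlocks S⁻¹ 0 0 W⁻¹ *
          Matrix.fromBlocks 1 (-(F * W⁻¹)) 0 1) * ((Uᴴ * H * U) * (Uᴴ * H⁻¹ * U)) := by
        rw [← hLeftInv, Matrix.mul_assoc]
    _ = _ := by rw [hRightInv, Matrix.mul_one]
end

section
/- Fix n ≥ 1, real numbers (V_k)_{k ∈ B_n} with V_{2ℓ} + V_{2ℓ+1} ≠ 0 for all 0 ≤ ℓ ≤ 2^{n−1}−1, and suppose H_n and (RH)_{n−1} are invertible. Then for every k ∈ B_{n−1} with k ≠ 0: ⟨δ_{2k}, H_n^{−1} δ_0⟩ = 2 · (V_1/(V_0+V_1)) · (V_{2k+1}/(V_{2k}+V_{2k+1})) · ⟨δ_k, (RH)_{n−1}^{−1} δ_0⟩. -/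
open MeasureTheory ProbabilityTheory Matrix Filter Topology

noncomputable section GFRAux

namespace GFR

open Matrix

/-! ### Arithmetic of the hierarchical distance -/

lemma hdist_le_iff (j k r : ℕ) : hdist j k ≤ r ↔ j / 2 ^ r = k / 2 ^ r := by
  have hmono : ∀ {a b : ℕ}, a ≤ b → j / 2 ^ a = k / 2 ^ a → j / 2 ^ b = k / 2 ^ b := by
    intro a b hab h
    have hb : (2:ℕ) ^ b = 2 ^ a * 2 ^ (b - a) := by rw [← pow_add]; congr 1; omega
    rw [hb, ← Nat.div_div_eq_div_mul, ← Nat.div_div_eq_div_mul, h]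
  have hne : (j + k) ∈ {r | j / 2 ^ r = k / 2 ^ r} := by
    have h1 : j < 2 ^ (j + k) :=
      lt_of_lt_of_le (Nat.lt_two_pow_self (n := j)) (Nat.pow_le_pow_right (by norm_num) (by omega))
    have h2 : k < 2 ^ (j + k) :=
      lt_of_lt_of_le (Nat.lt_two_pow_self (n := k)) (Nat.pow_le_pow_right (by norm_num) (by omega))
    simp [Set.mem_setOf_eq, Nat.div_eq_of_lt h1, Nat.div_eq_of_lt h2]
  constructor
  · intro h
    exact hmono h (Nat.sInf_mem ⟨_, hne⟩)
  · intro h; exact Nat.sInf_le h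

lemma div_pow_succ (a r : ℕ) : a / 2 ^ (r + 1) = a / 2 / 2 ^ r := by
  rw [Nat.div_div_eq_div_mul, ← pow_succ']

lemma hdist_even_iff (j k r : ℕ) : hdist j (2 * k) ≤ r + 1 ↔ hdist (j / 2) k ≤ r := by
  have h1 : 2 * k / 2 = k := by omega
  rw [hdist_le_iff, hdist_le_iff, div_pow_succ, div_pow_succ, h1]

lemma hdist_odd_iff (j k r : ℕ) : hdist j (2 * k + 1) ≤ r + 1 ↔ hdist (j / 2) k ≤ r := by
  have h1 : (2 * k + 1) / 2 = k := by omega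
  rw [hdist_le_iff, hdist_le_iff, div_pow_succ, div_pow_succ, h1]

lemma hdist_zero_iff (j k : ℕ) : hdist j k ≤ 0 ↔ j = k := by
  rw [hdist_le_iff]; simp

/-! ### The Laplacian entries under renormalization -/

lemma summable_aux (p : ℕ → ℝ) (hp : Summable p) (c : ℕ → Prop) [DecidablePred c] :
    Summable fun r => if c r then p r / 2 ^ r else 0 := by
  apply Summable.of_norm_bounded hp.abs
  intro r
  rw [Real.norm_eq_abs]
  split_ifs
  · rw [abs_div, abs_pow, abs_two]
    exact div_le_self (abs_nonneg _) (one_le_pow₀ one_le_two)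
  · simp [abs_nonneg]

lemma shiftSeq_summable {p : ℕ → ℝ} (hp : Summable p) : Summable (shiftSeq p) :=
  (summable_nat_add_iff 1).2 hp

lemma lapEntry_odd (p : ℕ → ℝ) (j k : ℕ) :
    lapEntry p j (2 * k + 1) = lapEntry p j (2 * k) := by
  unfold lapEntry
  refine tsum_congr fun r => ?_
  rcases r with _ | r
  · simp
  · refine if_congr ?_ rfl rfl
    constructor
    · rintro ⟨-, h⟩
      exact ⟨by omega, (hdist_even_iff j k r).2 ((hdist_odd_iff j k r).1 h)⟩
    · rintro ⟨-, h⟩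
      exact ⟨by omega, (hdist_odd_iff j k r).2 ((hdist_even_iff j k r).1 h)⟩

lemma two_mul_lapEntry (p : ℕ → ℝ) (hp : Summable p) (j k : ℕ) :
    2 * lapEntry p j (2 * k) =
      (if j / 2 = k then p 1 else 0) + lapEntry (shiftSeq p) (j / 2) k := by
  classical
  have hsum : Summable fun r => if 1 ≤ r ∧ hdist j (2 * k) ≤ r then p r / 2 ^ r else 0 :=
    summable_aux p hp _
  have hstep : ∀ r : ℕ,
      (if 1 ≤ r + 1 ∧ hdist j (2 * k) ≤ r + 1 then p (r + 1) / 2 ^ (r + 1) else 0) =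
      (if hdist (j / 2) k ≤ r then p (r + 1) / 2 ^ (r + 1) else 0) := by
    intro r
    refine if_congr ?_ rfl rfl
    rw [hdist_even_iff]
    simp [Nat.succ_le_succ]
  have h1 : lapEntry p j (2 * k) =
      ∑' r : ℕ, (if hdist (j / 2) k ≤ r then p (r + 1) / 2 ^ (r + 1) else 0) := by
    unfold lapEntry
    rw [Summable.tsum_eq_zero_add hsum]
    simp only [hstep]
    simp
  have h2 : 2 * lapEntry p j (2 * k) =
      ∑' r : ℕ, (if hdist (j / 2) k ≤ r then p (r + 1) / 2 ^ r else 0) := by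
    rw [h1, ← tsum_mul_left]
    refine tsum_congr fun r => ?_
    split_ifs
    · rw [pow_succ]; ring
    · ring
  rw [h2]
  have hsplit : ∀ r : ℕ,
      (if hdist (j / 2) k ≤ r then p (r + 1) / 2 ^ r else 0) =
      (if r = 0 then (if j / 2 = k then p 1 else 0) else 0) +
      (if 1 ≤ r ∧ hdist (j / 2) k ≤ r then shiftSeq p r / 2 ^ r else 0) := by
    intro r
    rcases r with _ | r
    · by_cases h : hdist (j / 2) k ≤ 0
      · rw [if_pos h, if_pos rfl, if_pos ((hdist_zero_iff _ _).1 h)]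
        simp [shiftSeq]
      · have h' : ¬ j / 2 = k := fun hc => h ((hdist_zero_iff _ _).2 hc)
        rw [if_neg h, if_pos rfl, if_neg h']
        simp
    · simp only [Nat.succ_ne_zero, if_false, zero_add, shiftSeq]
      refine if_congr ?_ rfl rfl
      simp [Nat.succ_le_succ]
  simp only [hsplit]
  rw [Summable.tsum_add ?_ (summable_aux (shiftSeq p) (shiftSeq_summable hp) _)]
  · rw [tsum_ite_eq]
    rfl
  · exact summable_of_ne_finset_zero (s := {0}) (by intro b hb; simp at hb; simp [hb])

/-! ### The isometries -/

def halfFin {n : ℕ} (j : Fin (2 ^ (n + 1))) : Fin (2 ^ n) :=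
  ⟨(j : ℕ) / 2, by
    have h := j.isLt
    have h2 : (2:ℕ) ^ (n + 1) = 2 ^ n * 2 := pow_succ 2 n
    omega⟩

lemma halfFin_dblFin {n : ℕ} (k : Fin (2 ^ n)) : halfFin (dblFin k) = k := by
  apply Fin.ext; show (2 * (k : ℕ)) / 2 = k; omega

lemma halfFin_dblFin1 {n : ℕ} (k : Fin (2 ^ n)) : halfFin (dblFin1 k) = k := by
  apply Fin.ext; show (2 * (k : ℕ) + 1) / 2 = k; omega

lemma halfFin_fin0 {n : ℕ} : halfFin (fin0 (n + 1)) = fin0 n := by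
  apply Fin.ext; show (0 : ℕ) / 2 = 0; omega

lemma dblFin_mod {n : ℕ} (k : Fin (2 ^ n)) : ((dblFin k : Fin (2 ^ (n+1))) : ℕ) % 2 = 0 := by
  show (2 * (k : ℕ)) % 2 = 0; omega

lemma fin0_mod {n : ℕ} : ((fin0 (n + 1) : Fin (2 ^ (n+1))) : ℕ) % 2 = 0 := rfl

lemma Uemat_apply {n : ℕ} (j : Fin (2 ^ (n + 1))) (k : Fin (2 ^ n)) :
    Uemat n j k = if k = halfFin j then (Real.sqrt 2)⁻¹ else 0 := by
  obtain ⟨j, hj⟩ := j; obtain ⟨k, hk⟩ := k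
  simp only [Uemat, halfFin, Fin.mk.injEq]
  split_ifs <;> first | rfl | (exfalso; omega)

lemma Ufmat_apply {n : ℕ} (j : Fin (2 ^ (n + 1))) (k : Fin (2 ^ n)) :
    Ufmat n j k = if k = halfFin j then
      (if (j : ℕ) % 2 = 0 then (Real.sqrt 2)⁻¹ else -(Real.sqrt 2)⁻¹) else 0 := by
  obtain ⟨j, hj⟩ := j; obtain ⟨k, hk⟩ := k
  simp only [Ufmat, halfFin, Fin.mk.injEq]
  split_ifs <;> first | rfl | (exfalso; omega)

lemma Uemat_apply' {n : ℕ} (m : Fin (2 ^ (n + 1))) (k : Fin (2 ^ n)) :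
    Uemat n m k = (if m = dblFin k then (Real.sqrt 2)⁻¹ else 0) +
      (if m = dblFin1 k then (Real.sqrt 2)⁻¹ else 0) := by
  obtain ⟨m, hm⟩ := m; obtain ⟨k, hk⟩ := k
  simp only [Uemat, dblFin, dblFin1, Fin.mk.injEq]
  split_ifs <;> first | (exfalso; omega) | simp

lemma Ufmat_apply' {n : ℕ} (m : Fin (2 ^ (n + 1))) (k : Fin (2 ^ n)) :
    Ufmat n m k = (if m = dblFin k then (Real.sqrt 2)⁻¹ else 0) +
      (if m = dblFin1 k then -(Real.sqrt 2)⁻¹ else 0) := by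
  obtain ⟨m, hm⟩ := m; obtain ⟨k, hk⟩ := k
  simp only [Ufmat, dblFin, dblFin1, Fin.mk.injEq]
  split_ifs <;> first | (exfalso; omega) | simp

lemma Ue_mul_apply {n : ℕ} (X : Matrix (Fin (2 ^ n)) (Fin (2 ^ n)) ℝ)
    (j : Fin (2 ^ (n + 1))) (k : Fin (2 ^ n)) :
    (Uemat n * X) j k = (Real.sqrt 2)⁻¹ * X (halfFin j) k := by
  rw [Matrix.mul_apply]
  simp only [Uemat_apply, ite_mul, zero_mul]
  rw [Finset.sum_ite_eq' Finset.univ (halfFin j) (fun m => (Real.sqrt 2)⁻¹ * X m k)]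
  simp

lemma Uf_mul_apply {n : ℕ} (X : Matrix (Fin (2 ^ n)) (Fin (2 ^ n)) ℝ)
    (j : Fin (2 ^ (n + 1))) (k : Fin (2 ^ n)) :
    (Ufmat n * X) j k = (if (j : ℕ) % 2 = 0 then (Real.sqrt 2)⁻¹ else -(Real.sqrt 2)⁻¹) *
      X (halfFin j) k := by
  rw [Matrix.mul_apply]
  simp only [Ufmat_apply]
  set c : ℝ := (if (j : ℕ) % 2 = 0 then (Real.sqrt 2)⁻¹ else -(Real.sqrt 2)⁻¹) with hc
  simp only [ite_mul, zero_mul]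
  rw [Finset.sum_ite_eq' Finset.univ (halfFin j) (fun m => c * X m k)]
  simp

lemma mul_Ue_apply {n : ℕ} (H : Matrix (Fin (2 ^ (n + 1))) (Fin (2 ^ (n + 1))) ℝ)
    (j : Fin (2 ^ (n + 1))) (k : Fin (2 ^ n)) :
    (H * Uemat n) j k = (Real.sqrt 2)⁻¹ * (H j (dblFin k) + H j (dblFin1 k)) := by
  rw [Matrix.mul_apply]
  simp only [Uemat_apply', mul_add, mul_ite, mul_zero, Finset.sum_add_distrib]
  rw [Finset.sum_ite_eq' Finset.univ (dblFin k) (fun m => H j m * (Real.sqrt 2)⁻¹),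
    Finset.sum_ite_eq' Finset.univ (dblFin1 k) (fun m => H j m * (Real.sqrt 2)⁻¹)]
  simp
  ring

lemma mul_Uf_apply {n : ℕ} (H : Matrix (Fin (2 ^ (n + 1))) (Fin (2 ^ (n + 1))) ℝ)
    (j : Fin (2 ^ (n + 1))) (k : Fin (2 ^ n)) :
    (H * Ufmat n) j k = (Real.sqrt 2)⁻¹ * (H j (dblFin k) - H j (dblFin1 k)) := by
  rw [Matrix.mul_apply]
  simp only [Ufmat_apply', mul_add, mul_ite, mul_zero, mul_neg, Finset.sum_add_distrib]
  rw [Finset.sum_ite_eq' Finset.univ (dblFin k) (fun m => H j m * (Real.sqrt 2)⁻¹),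
    Finset.sum_ite_eq' Finset.univ (dblFin1 k) (fun m => -(H j m * (Real.sqrt 2)⁻¹))]
  simp
  ring

lemma sqrt_two_inv_mul : (Real.sqrt 2)⁻¹ * (Real.sqrt 2)⁻¹ = 1 / 2 := by
  rw [← mul_inv, Real.mul_self_sqrt (by norm_num : (0:ℝ) ≤ 2)]
  norm_num

lemma sum_ite_ite {n : ℕ} (a b : Fin (2 ^ n)) (c c' : ℝ) :
    (∑ m : Fin (2 ^ n), (if m = a then c else 0) * (if m = b then c' else 0)) =
      if a = b then c * c' else 0 := by
  rw [Finset.sum_eq_single a]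
  · by_cases hab : a = b
    · subst hab; simp
    · simp [hab]
  · intro m _ hm; rw [if_neg hm, zero_mul]
  · intro h; exact absurd (Finset.mem_univ a) h

lemma UUT {n : ℕ} : Umat n * (Umat n)ᵀ = 1 := by
  rw [Umat, transpose_fromCols, fromCols_mul_fromRows]
  ext j j'
  rw [Matrix.add_apply, Matrix.mul_apply, Matrix.mul_apply, Matrix.one_apply]
  simp only [Matrix.transpose_apply, Uemat_apply, Ufmat_apply]
  rw [sum_ite_ite, sum_ite_ite]
  by_cases h : j = j'
  · subst h
    rw [if_pos rfl, if_pos rfl, if_pos rfl]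
    by_cases hp : (j : ℕ) % 2 = 0
    · rw [if_pos hp, sqrt_two_inv_mul]; norm_num
    · rw [if_neg hp, neg_mul_neg, sqrt_two_inv_mul]; norm_num
  · rw [if_neg h]
    by_cases h2 : halfFin j = halfFin j'
    · rw [if_pos h2, if_pos h2]
      have hval : (j : ℕ) / 2 = (j' : ℕ) / 2 := congrArg Fin.val h2
      have hne : (j : ℕ) ≠ (j' : ℕ) := fun hc => h (Fin.ext hc)
      have hpar : ((j : ℕ) % 2 = 0 ∧ ¬ (j' : ℕ) % 2 = 0) ∨
          (¬ (j : ℕ) % 2 = 0 ∧ (j' : ℕ) % 2 = 0) := by omega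
      rcases hpar with ⟨ha, hb⟩ | ⟨ha, hb⟩
      · rw [if_pos ha, if_neg hb, mul_neg, sqrt_two_inv_mul]; ring
      · rw [if_neg ha, if_pos hb, neg_mul, sqrt_two_inv_mul]; ring
    · rw [if_neg h2, if_neg h2]
      norm_num

/-! ### Block decomposition of the Hamiltonian -/

def Amat (p v : ℕ → ℝ) (n : ℕ) : Matrix (Fin (2 ^ n)) (Fin (2 ^ n)) ℝ :=
  fun j k => lapEntry (shiftSeq p) j k +
    if j = k then p 1 + (v (2 * (j : ℕ)) + v (2 * (j : ℕ) + 1)) / 2 else 0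

def Mblk (p v : ℕ → ℝ) (n : ℕ) :
    Matrix (Fin (2 ^ n) ⊕ Fin (2 ^ n)) (Fin (2 ^ n) ⊕ Fin (2 ^ n)) ℝ :=
  fromBlocks (Amat p v n) (Vfemat v n) (Vfemat v n) (Vffmat v n)

lemma key_e (p v : ℕ → ℝ) (hp : Summable p) {n : ℕ} (j : Fin (2 ^ (n + 1)))
    (k : Fin (2 ^ n)) :
    (Hmat p v (n + 1) * Uemat n) j k =
      (Uemat n * Amat p v n) j k + (Ufmat n * Vfemat v n) j k := by
  rw [mul_Ue_apply, Ue_mul_apply, Uf_mul_apply]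
  have e1 : (j = dblFin k) ↔ ((j : ℕ) = 2 * (k : ℕ)) := by rw [Fin.ext_iff]; exact Iff.rfl
  have e2 : (j = dblFin1 k) ↔ ((j : ℕ) = 2 * (k : ℕ) + 1) := by rw [Fin.ext_iff]; exact Iff.rfl
  have e3 : (halfFin j = k) ↔ ((j : ℕ) / 2 = (k : ℕ)) := by rw [Fin.ext_iff]; exact Iff.rfl
  have c1 : ((dblFin k : Fin (2 ^ (n + 1))) : ℕ) = 2 * (k : ℕ) := rfl
  have c2 : ((dblFin1 k : Fin (2 ^ (n + 1))) : ℕ) = 2 * (k : ℕ) + 1 := rfl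
  have c3 : ((halfFin j : Fin (2 ^ n)) : ℕ) = (j : ℕ) / 2 := rfl
  have hlap : lapEntry p (j : ℕ) (2 * (k : ℕ)) + lapEntry p (j : ℕ) (2 * (k : ℕ) + 1) =
      (if (j : ℕ) / 2 = (k : ℕ) then p 1 else 0) +
        lapEntry (shiftSeq p) ((j : ℕ) / 2) (k : ℕ) := by
    rw [lapEntry_odd]
    have h := two_mul_lapEntry p hp (j : ℕ) (k : ℕ)
    linarith
  simp only [Hmat, Amat, Vfemat, Matrix.diagonal_apply, e1, e2, e3, c1, c2, c3]
  by_cases hjk : (j : ℕ) / 2 = (k : ℕ)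
  · rw [if_pos hjk] at hlap
    by_cases hpar : (j : ℕ) % 2 = 0
    · have hj2 : (j : ℕ) = 2 * (k : ℕ) := by omega
      have hd : 2 * (k : ℕ) / 2 = (k : ℕ) := by omega
      rw [hj2] at hlap ⊢
      rw [hd] at hlap ⊢
      rw [if_pos rfl, if_neg (by omega : ¬ 2 * (k : ℕ) = 2 * (k : ℕ) + 1), if_pos rfl,
        if_pos rfl, if_pos (by omega : 2 * (k : ℕ) % 2 = 0)]
      linear_combination (Real.sqrt 2)⁻¹ * hlap
    · have hj2 : (j : ℕ) = 2 * (k : ℕ) + 1 := by omega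
      have hd : (2 * (k : ℕ) + 1) / 2 = (k : ℕ) := by omega
      rw [hj2] at hlap ⊢
      rw [hd] at hlap ⊢
      rw [if_neg (by omega : ¬ 2 * (k : ℕ) + 1 = 2 * (k : ℕ)), if_pos rfl, if_pos rfl,
        if_pos rfl, if_neg (by omega : ¬ (2 * (k : ℕ) + 1) % 2 = 0)]
      linear_combination (Real.sqrt 2)⁻¹ * hlap
  · rw [if_neg hjk] at hlap
    rw [if_neg (by omega : ¬ (j : ℕ) = 2 * (k : ℕ)),
      if_neg (by omega : ¬ (j : ℕ) = 2 * (k : ℕ) + 1), if_neg hjk, if_neg hjk]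
    by_cases hpar : (j : ℕ) % 2 = 0
    · rw [if_pos hpar]
      linear_combination (Real.sqrt 2)⁻¹ * hlap
    · rw [if_neg hpar]
      linear_combination (Real.sqrt 2)⁻¹ * hlap

lemma key_f (p v : ℕ → ℝ) {n : ℕ} (j : Fin (2 ^ (n + 1))) (k : Fin (2 ^ n)) :
    (Hmat p v (n + 1) * Ufmat n) j k =
      (Uemat n * Vfemat v n) j k + (Ufmat n * Vffmat v n) j k := by
  rw [mul_Uf_apply, Ue_mul_apply, Uf_mul_apply]
  have e1 : (j = dblFin k) ↔ ((j : ℕ) = 2 * (k : ℕ)) := by rw [Fin.ext_iff]; exact Iff.rfl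
  have e2 : (j = dblFin1 k) ↔ ((j : ℕ) = 2 * (k : ℕ) + 1) := by rw [Fin.ext_iff]; exact Iff.rfl
  have e3 : (halfFin j = k) ↔ ((j : ℕ) / 2 = (k : ℕ)) := by rw [Fin.ext_iff]; exact Iff.rfl
  have c1 : ((dblFin k : Fin (2 ^ (n + 1))) : ℕ) = 2 * (k : ℕ) := rfl
  have c2 : ((dblFin1 k : Fin (2 ^ (n + 1))) : ℕ) = 2 * (k : ℕ) + 1 := rfl
  have c3 : ((halfFin j : Fin (2 ^ n)) : ℕ) = (j : ℕ) / 2 := rfl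
  have hlap : lapEntry p (j : ℕ) (2 * (k : ℕ) + 1) = lapEntry p (j : ℕ) (2 * (k : ℕ)) :=
    lapEntry_odd p _ _
  simp only [Hmat, Vfemat, Vffmat, Matrix.diagonal_apply, e1, e2, e3, c1, c2, c3]
  by_cases hjk : (j : ℕ) / 2 = (k : ℕ)
  · by_cases hpar : (j : ℕ) % 2 = 0
    · have hj2 : (j : ℕ) = 2 * (k : ℕ) := by omega
      have hd : 2 * (k : ℕ) / 2 = (k : ℕ) := by omega
      rw [hj2] at hlap ⊢
      rw [hd]
      rw [if_pos rfl, if_neg (by omega : ¬ 2 * (k : ℕ) = 2 * (k : ℕ) + 1), if_pos rfl,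
        if_pos rfl, if_pos (by omega : 2 * (k : ℕ) % 2 = 0)]
      linear_combination (-(Real.sqrt 2)⁻¹) * hlap
    · have hj2 : (j : ℕ) = 2 * (k : ℕ) + 1 := by omega
      have hd : (2 * (k : ℕ) + 1) / 2 = (k : ℕ) := by omega
      rw [hj2] at hlap ⊢
      rw [hd]
      rw [if_neg (by omega : ¬ 2 * (k : ℕ) + 1 = 2 * (k : ℕ)), if_pos rfl, if_pos rfl,
        if_pos rfl, if_neg (by omega : ¬ (2 * (k : ℕ) + 1) % 2 = 0)]
      linear_combination (-(Real.sqrt 2)⁻¹) * hlap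
  · rw [if_neg (by omega : ¬ (j : ℕ) = 2 * (k : ℕ)),
      if_neg (by omega : ¬ (j : ℕ) = 2 * (k : ℕ) + 1), if_neg hjk, if_neg hjk]
    by_cases hpar : (j : ℕ) % 2 = 0
    · rw [if_pos hpar]
      linear_combination (-(Real.sqrt 2)⁻¹) * hlap
    · rw [if_neg hpar]
      linear_combination (-(Real.sqrt 2)⁻¹) * hlap

lemma HU (p v : ℕ → ℝ) (hp : Summable p) {n : ℕ} :
    Hmat p v (n + 1) * Umat n = Umat n * Mblk p v n := by
  rw [Umat, Matrix.mul_fromCols, Mblk, fromCols_mul_fromBlocks]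
  ext j a
  cases a with
  | inl a =>
    simp only [fromCols, Matrix.of_apply, Sum.elim_inl]
    rw [key_e p v hp j a, Matrix.add_apply]
  | inr a =>
    simp only [fromCols, Matrix.of_apply, Sum.elim_inr]
    rw [key_f p v j a, Matrix.add_apply]

/-! ### Schur complement -/

lemma Vff_det_isUnit (v : ℕ → ℝ) (n : ℕ)
    (hv : ∀ k : ℕ, k < 2 ^ n → v (2 * k) + v (2 * k + 1) ≠ 0) :
    IsUnit (Vffmat v n).det := by
  rw [Vffmat, Matrix.det_diagonal, isUnit_iff_ne_zero]
  rw [Finset.prod_ne_zero_iff]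
  intro k _
  exact div_ne_zero (hv k k.isLt) two_ne_zero

lemma Vff_inv (v : ℕ → ℝ) (n : ℕ)
    (hv : ∀ k : ℕ, k < 2 ^ n → v (2 * k) + v (2 * k + 1) ≠ 0) :
    (Vffmat v n)⁻¹ = Matrix.diagonal fun k : Fin (2 ^ n) =>
      ((v (2 * (k : ℕ)) + v (2 * (k : ℕ) + 1)) / 2)⁻¹ := by
  apply Matrix.inv_eq_right_inv
  rw [Vffmat, Matrix.diagonal_mul_diagonal, ← Matrix.diagonal_one]
  refine congrArg Matrix.diagonal (funext fun i => ?_)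
  exact mul_inv_cancel₀ (div_ne_zero (hv _ i.isLt) two_ne_zero)

lemma A_eq (p v : ℕ → ℝ) (n : ℕ)
    (hv : ∀ k : ℕ, k < 2 ^ n → v (2 * k) + v (2 * k + 1) ≠ 0) :
    Amat p v n = Hmat (shiftSeq p) (renPotM p v) n +
      Vfemat v n * (Vffmat v n)⁻¹ * Vfemat v n := by
  rw [Vff_inv v n hv, Vfemat, Matrix.diagonal_mul_diagonal, Matrix.diagonal_mul_diagonal]
  ext j i
  rw [Matrix.add_apply, Matrix.diagonal_apply]
  simp only [Amat, Hmat, renPotM]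
  by_cases hji : j = i
  · subst hji
    rw [if_pos rfl, if_pos rfl, if_pos rfl]
    have hs : v (2 * (j : ℕ)) + v (2 * (j : ℕ) + 1) ≠ 0 := hv _ j.isLt
    field_simp
    ring
  · rw [if_neg hji, if_neg hji, if_neg hji]
    simp

/-! ### The inverse of the block matrix and of `H` -/

lemma block_inv {N : Type*} [Fintype N] [DecidableEq N]
    (S B C G Cinv : Matrix N N ℝ)
    (hSG : S * G = 1) (hCC : C * Cinv = 1) :
    fromBlocks (S + B * Cinv * B) B B C *
      fromBlocks G (-(G * B * Cinv)) (-(Cinv * B * G))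
        (Cinv + Cinv * B * G * B * Cinv) = 1 := by
  rw [fromBlocks_multiply, ← fromBlocks_one, fromBlocks_inj]
  refine ⟨?_, ?_, ?_, ?_⟩ <;>
    · simp only [Matrix.add_mul, Matrix.mul_add, Matrix.mul_neg, Matrix.neg_mul,
        ← Matrix.mul_assoc, hSG, hCC, Matrix.one_mul]
      abel

def MinvMat (p v : ℕ → ℝ) (n : ℕ) :
    Matrix (Fin (2 ^ n) ⊕ Fin (2 ^ n)) (Fin (2 ^ n) ⊕ Fin (2 ^ n)) ℝ :=
  fromBlocks ((Hmat (shiftSeq p) (renPotM p v) n)⁻¹)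
    (-((Hmat (shiftSeq p) (renPotM p v) n)⁻¹ * Vfemat v n * (Vffmat v n)⁻¹))
    (-((Vffmat v n)⁻¹ * Vfemat v n * (Hmat (shiftSeq p) (renPotM p v) n)⁻¹))
    ((Vffmat v n)⁻¹ + (Vffmat v n)⁻¹ * Vfemat v n * (Hmat (shiftSeq p) (renPotM p v) n)⁻¹ *
      Vfemat v n * (Vffmat v n)⁻¹)

lemma Mblk_mul_Minv (p v : ℕ → ℝ) (n : ℕ)
    (hv : ∀ k : ℕ, k < 2 ^ n → v (2 * k) + v (2 * k + 1) ≠ 0)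
    (hRH : IsUnit (Hmat (shiftSeq p) (renPotM p v) n).det) :
    Mblk p v n * MinvMat p v n = 1 := by
  rw [Mblk, A_eq p v n hv, MinvMat]
  exact block_inv _ _ _ _ _ (Matrix.mul_nonsing_inv _ hRH)
    (Matrix.mul_nonsing_inv _ (Vff_det_isUnit v n hv))

lemma Hinv_eq (p v : ℕ → ℝ) (n : ℕ) (hp : Summable p)
    (hv : ∀ k : ℕ, k < 2 ^ n → v (2 * k) + v (2 * k + 1) ≠ 0)
    (hRH : IsUnit (Hmat (shiftSeq p) (renPotM p v) n).det) :
    (Hmat p v (n + 1))⁻¹ = Umat n * MinvMat p v n * (Umat n)ᵀ := by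
  apply Matrix.inv_eq_right_inv
  rw [← Matrix.mul_assoc, ← Matrix.mul_assoc, HU p v hp,
    Matrix.mul_assoc (Umat n) (Mblk p v n), Mblk_mul_Minv p v n hv hRH,
    Matrix.mul_one, UUT]

end GFR

end GFRAux

/-- **Green function recursion** (formula (14) in the proof of Theorem 5): for `n ≥ 1`
(written `n+1` here) and `k ∈ B_n \ {0}`,
`G_{n+1}(0, 2k; 0) = 2 (V_1/(V_0+V_1)) (V_{2k+1}/(V_{2k}+V_{2k+1})) · RG_n(0, k; 0)`. -/
theorem green_function_recursion (n : ℕ) (p : ℕ → ℝ) (hps : Summable p) (v : ℕ → ℝ)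
    (hv : ∀ k : ℕ, k < 2 ^ n → v (2 * k) + v (2 * k + 1) ≠ 0)
    (hH : IsUnit (Hmat p v (n + 1)).det)
    (hRH : IsUnit (Hmat (shiftSeq p) (renPotM p v) n).det)
    (k : Fin (2 ^ n)) (hk : (k : ℕ) ≠ 0) :
    (Hmat p v (n + 1))⁻¹ (dblFin k) (fin0 (n + 1)) =
      2 * (v 1 / (v 0 + v 1)) * (v (2 * k + 1) / (v (2 * k) + v (2 * k + 1))) *
        (Hmat (shiftSeq p) (renPotM p v) n)⁻¹ k (fin0 n) := by
  classical
  rw [GFR.Hinv_eq p v n hps hv hRH]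
  set w : Fin (2 ^ n) → ℝ := fun i =>
    (v (2 * (i : ℕ)) - v (2 * (i : ℕ) + 1)) / 2 *
      ((v (2 * (i : ℕ)) + v (2 * (i : ℕ) + 1)) / 2)⁻¹ with hw
  have hBC : Vfemat v n * (Vffmat v n)⁻¹ = Matrix.diagonal w := by
    rw [GFR.Vff_inv v n hv, Vfemat, Matrix.diagonal_mul_diagonal]
  have hCB : (Vffmat v n)⁻¹ * Vfemat v n = Matrix.diagonal w := by
    rw [GFR.Vff_inv v n hv, Vfemat, Matrix.diagonal_mul_diagonal]
    exact congrArg Matrix.diagonal (funext fun i => mul_comm _ _)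
  set g : ℝ := (Hmat (shiftSeq p) (renPotM p v) n)⁻¹ k (fin0 n) with hg
  have hkne : k ≠ fin0 n := fun hc => hk (by rw [hc]; rfl)
  have m11 : GFR.MinvMat p v n (Sum.inl k) (Sum.inl (fin0 n)) = g :=
    Matrix.fromBlocks_apply₁₁ _ _ _ _ _ _
  have m12 : GFR.MinvMat p v n (Sum.inl k) (Sum.inr (fin0 n)) = -(g * w (fin0 n)) := by
    rw [GFR.MinvMat, Matrix.fromBlocks_apply₁₂, Matrix.neg_apply, Matrix.mul_assoc, hBC,
      Matrix.mul_diagonal]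
  have m21 : GFR.MinvMat p v n (Sum.inr k) (Sum.inl (fin0 n)) = -(w k * g) := by
    rw [GFR.MinvMat, Matrix.fromBlocks_apply₂₁, Matrix.neg_apply, hCB, Matrix.diagonal_mul]
  have m22 : GFR.MinvMat p v n (Sum.inr k) (Sum.inr (fin0 n)) = w k * g * w (fin0 n) := by
    rw [GFR.MinvMat, Matrix.fromBlocks_apply₂₂, Matrix.add_apply, hCB,
      Matrix.mul_assoc (Matrix.diagonal w * (Hmat (shiftSeq p) (renPotM p v) n)⁻¹)
        (Vfemat v n) ((Vffmat v n)⁻¹),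
      hBC, Matrix.mul_diagonal, Matrix.diagonal_mul, GFR.Vff_inv v n hv,
      Matrix.diagonal_apply_ne _ hkne, zero_add]
  have hU0 : ∀ b, (Umat n)ᵀ b (fin0 (n + 1)) =
      (if b = Sum.inl (fin0 n) then (Real.sqrt 2)⁻¹ else 0) +
      (if b = Sum.inr (fin0 n) then (Real.sqrt 2)⁻¹ else 0) := by
    rintro (m | m)
    · rw [Matrix.transpose_apply, Umat, fromCols_apply_inl, GFR.Uemat_apply,
        GFR.halfFin_fin0]
      simp
    · rw [Matrix.transpose_apply, Umat, fromCols_apply_inr, GFR.Ufmat_apply,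
        GFR.halfFin_fin0, if_pos GFR.fin0_mod]
      simp
  have hU2k : ∀ b, Umat n (dblFin k) b =
      (if b = Sum.inl k then (Real.sqrt 2)⁻¹ else 0) +
      (if b = Sum.inr k then (Real.sqrt 2)⁻¹ else 0) := by
    rintro (m | m)
    · rw [Umat, fromCols_apply_inl, GFR.Uemat_apply, GFR.halfFin_dblFin]
      simp
    · rw [Umat, fromCols_apply_inr, GFR.Ufmat_apply, GFR.halfFin_dblFin,
        if_pos (GFR.dblFin_mod k)]
      simp
  have hstep2 : ∀ z, (Umat n * GFR.MinvMat p v n) (dblFin k) z =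
      (Real.sqrt 2)⁻¹ * GFR.MinvMat p v n (Sum.inl k) z +
      (Real.sqrt 2)⁻¹ * GFR.MinvMat p v n (Sum.inr k) z := by
    intro z
    rw [Matrix.mul_apply]
    simp only [hU2k, add_mul, ite_mul, zero_mul, Finset.sum_add_distrib,
      Finset.sum_ite_eq', Finset.mem_univ, if_true]
  have hstep1 : (Umat n * GFR.MinvMat p v n * (Umat n)ᵀ) (dblFin k) (fin0 (n + 1)) =
      (Umat n * GFR.MinvMat p v n) (dblFin k) (Sum.inl (fin0 n)) * (Real.sqrt 2)⁻¹ +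
      (Umat n * GFR.MinvMat p v n) (dblFin k) (Sum.inr (fin0 n)) * (Real.sqrt 2)⁻¹ := by
    rw [Matrix.mul_apply]
    simp only [hU0, mul_add, mul_ite, mul_zero, Finset.sum_add_distrib,
      Finset.sum_ite_eq', Finset.mem_univ, if_true]
  rw [hstep1, hstep2, hstep2, m11, m12, m21, m22]
  have hLL : ((Real.sqrt 2)⁻¹ * g + (Real.sqrt 2)⁻¹ * -(w k * g)) * (Real.sqrt 2)⁻¹ +
      ((Real.sqrt 2)⁻¹ * -(g * w (fin0 n)) + (Real.sqrt 2)⁻¹ * (w k * g * w (fin0 n))) *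
        (Real.sqrt 2)⁻¹ =
      ((Real.sqrt 2)⁻¹ * (Real.sqrt 2)⁻¹) * ((1 - w (fin0 n)) * ((1 - w k) * g)) := by
    ring
  rw [hLL, GFR.sqrt_two_inv_mul]
  have hf0 : ((fin0 n : Fin (2 ^ n)) : ℕ) = 0 := rfl
  have h0 : v 0 + v 1 ≠ 0 := by
    have := hv 0 (Nat.two_pow_pos n)
    simpa using this
  have hsk : v (2 * (k : ℕ)) + v (2 * (k : ℕ) + 1) ≠ 0 := hv _ k.isLt
  rw [hw]
  simp only [hf0, Nat.mul_zero, Nat.zero_add]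
  field_simp
  ring
end

section
/- For every n ≥ 1, almost surely the vector φ_n = 2^{−n/2} 1_{B_n} is cyclic for H_{n,n−1}, i.e., the linear span of {(H_{n,n−1})^j φ_n : j = 0, 1, 2, …} equals ℓ²(B_n). -/
open MeasureTheory ProbabilityTheory Matrix Filter Topology

noncomputable section AuxCyclic

open Polynomial in
/-- Coefficient of a product of polynomials at the sum of degree bounds. -/
lemma aux_coeff_prod {ι : Type*} (s : Finset ι) (f : ι → Polynomial ℝ) (d : ι → ℕ)
    (h : ∀ i ∈ s, (f i).natDegree ≤ d i) :
    (∏ i ∈ s, f i).coeff (∑ i ∈ s, d i) = ∏ i ∈ s, (f i).coeff (d i) := by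
  classical
  induction s using Finset.induction_on with
  | empty => simp
  | @insert a s hx ih =>
    rw [Finset.prod_insert hx, Finset.sum_insert hx, Finset.prod_insert hx,
      Polynomial.coeff_mul_add_eq_of_natDegree_le (h a (Finset.mem_insert_self a s))
        ((Polynomial.natDegree_prod_le s f).trans
          (Finset.sum_le_sum fun i hi => h i (Finset.mem_insert_of_mem hi))),
      ih (fun i hi => h i (Finset.mem_insert_of_mem hi))]

/-- The zero set of a nonzero multivariate polynomial is null for any product of
atomless probability measures on `ℝ`. -/
lemma aux_poly_null : ∀ (N : ℕ) (μ : Fin N → Measure ℝ),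
    (∀ i, IsProbabilityMeasure (μ i)) → (∀ i (a : ℝ), μ i {a} = 0) →
    ∀ Q : MvPolynomial (Fin N) ℝ, Q ≠ 0 →
    Measure.pi μ {x | MvPolynomial.eval x Q = 0} = 0 := by
  intro N
  induction N with
  | zero =>
    intro μ _ _ Q hQ
    have he : {x : Fin 0 → ℝ | MvPolynomial.eval x Q = 0} = ∅ := by
      ext x
      simp only [Set.mem_setOf_eq, Set.mem_empty_iff_false, iff_false]
      intro hx
      exact hQ (MvPolynomial.funext fun y => by rw [Subsingleton.elim y x, hx, map_zero])
    rw [he, measure_empty]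
  | succ n IH =>
    intro μ hprob hatom Q hQ
    haveI := hprob
    set P : Polynomial (MvPolynomial (Fin n) ℝ) := MvPolynomial.finSuccEquiv ℝ n Q with hP
    have hPne : P ≠ 0 := by
      intro h
      rw [hP] at h
      apply hQ
      calc Q = (MvPolynomial.finSuccEquiv ℝ n).symm (MvPolynomial.finSuccEquiv ℝ n Q) :=
            ((MvPolynomial.finSuccEquiv ℝ n).symm_apply_apply Q).symm
        _ = (MvPolynomial.finSuccEquiv ℝ n).symm 0 := by rw [h]
        _ = 0 := map_zero _
    have hcne : P.leadingCoeff ≠ 0 := Polynomial.leadingCoeff_ne_zero.mpr hPne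
    set μ' : Fin n → Measure ℝ := fun j => μ ((0 : Fin (n+1)).succAbove j) with hμ'
    haveI : ∀ j, IsProbabilityMeasure (μ' j) := fun j => hprob _
    have hIH := IH μ' (fun j => hprob _) (fun j a => hatom _ a) P.leadingCoeff hcne
    have hcont : Continuous fun q : ℝ × (Fin n → ℝ) => MvPolynomial.eval (Fin.cons q.1 q.2) Q := by
      apply (MvPolynomial.continuous_eval Q).comp
      apply continuous_pi
      intro i
      refine Fin.cases ?_ ?_ i
      · simpa using (continuous_fst : Continuous fun q : ℝ × (Fin n → ℝ) => q.1)
      · intro j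
        simp only [Fin.cons_succ]
        exact (continuous_apply j).comp
          (continuous_snd : Continuous fun q : ℝ × (Fin n → ℝ) => q.2)
    have hT : MeasurableSet {q : ℝ × (Fin n → ℝ) | MvPolynomial.eval (Fin.cons q.1 q.2) Q = 0} :=
      hcont.measurable (measurableSet_singleton 0)
    have hpre : (⇑(MeasurableEquiv.piFinSuccAbove (fun _ : Fin (n+1) => ℝ) 0)) ⁻¹'
        {q : ℝ × (Fin n → ℝ) | MvPolynomial.eval (Fin.cons q.1 q.2) Q = 0}
        = {x | MvPolynomial.eval x Q = 0} := by
      ext y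
      have hy : (MeasurableEquiv.piFinSuccAbove (fun _ : Fin (n+1) => ℝ) 0) y
          = (y 0, fun j => y ((0 : Fin (n+1)).succAbove j)) := rfl
      simp only [Set.mem_preimage, Set.mem_setOf_eq, hy]
      have hcons : (Fin.cons (y 0) (fun j => y ((0 : Fin (n+1)).succAbove j))) = y := by
        have : (fun j : Fin n => y ((0 : Fin (n+1)).succAbove j)) = Fin.tail y := by
          funext j
          simp [Fin.succAbove_zero, Fin.tail]
        rw [this, Fin.cons_self_tail]
      rw [hcons]
    have key : Measure.pi μ {x | MvPolynomial.eval x Q = 0}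
        = ((μ 0).prod (Measure.pi μ'))
            {q : ℝ × (Fin n → ℝ) | MvPolynomial.eval (Fin.cons q.1 q.2) Q = 0} := by
      rw [← hpre]
      exact (measurePreserving_piFinSuccAbove μ 0).measure_preimage hT.nullMeasurableSet
    rw [key, Measure.prod_apply_symm hT]
    have hsec : ∀ᵐ y ∂(Measure.pi μ'), (μ 0) ((fun x => (x, y)) ⁻¹'
        {q : ℝ × (Fin n → ℝ) | MvPolynomial.eval (Fin.cons q.1 q.2) Q = 0}) = 0 := by
      have hae : ∀ᵐ y ∂(Measure.pi μ'), ¬ (MvPolynomial.eval y P.leadingCoeff = 0) := by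
        rw [ae_iff]
        simpa using hIH
      filter_upwards [hae] with y hy
      have hq : (P.map (MvPolynomial.eval y)) ≠ 0 := by
        intro h
        apply hy
        have h2 : (P.map (MvPolynomial.eval y)).coeff P.natDegree = 0 := by
          rw [h, Polynomial.coeff_zero]
        rw [Polynomial.coeff_map] at h2
        exact h2
      have hfin : {a : ℝ | Polynomial.eval a (P.map (MvPolynomial.eval y)) = 0}.Finite :=
        Polynomial.finite_setOf_isRoot hq
      have hss : ((fun x => (x, y)) ⁻¹'
          {q : ℝ × (Fin n → ℝ) | MvPolynomial.eval (Fin.cons q.1 q.2) Q = 0})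
          = {a : ℝ | Polynomial.eval a (P.map (MvPolynomial.eval y)) = 0} := by
        ext a
        simp only [Set.mem_preimage, Set.mem_setOf_eq]
        rw [MvPolynomial.eval_eq_eval_mv_eval' y a Q, hP]
      rw [hss]
      haveI : MeasureTheory.NullSingletonClass (μ 0) := ⟨hatom 0⟩
      exact hfin.countable.measure_zero _
    rw [lintegral_congr_ae hsec]
    exact lintegral_zero

/-- Push a ring hom through powers and `mulVec`. -/
lemma aux_map_pow_mulVec {R S : Type*} [CommRing R] [CommRing S] {N : ℕ} (g : R →+* S)
    (M : Matrix (Fin N) (Fin N) R) (w : Fin N → R) (j : ℕ) (i : Fin N) :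
    g (((M ^ j).mulVec w) i) = (((M.map g) ^ j).mulVec (fun k => g (w k))) i := by
  have hpow : (M ^ j).map g = (M.map g) ^ j := by
    simpa [RingHom.mapMatrix_apply] using map_pow (g.mapMatrix) M j
  rw [← hpow]
  simp [Matrix.mulVec, dotProduct, map_sum, Matrix.map_apply]

/-- The polynomial Hamiltonian. -/
def HmatP (p : ℕ → ℝ) (n : ℕ) :
    Matrix (Fin (2 ^ (n+1))) (Fin (2 ^ (n+1))) (MvPolynomial (Fin (2 ^ (n+1))) ℝ) :=
  fun j k => MvPolynomial.C (lapEntryT p n (j : ℕ) (k : ℕ)) +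
    if j = k then MvPolynomial.X j else 0

/-- The Krylov determinant as a polynomial in the potential values. -/
def krylovPoly (p : ℕ → ℝ) (n : ℕ) : MvPolynomial (Fin (2 ^ (n+1))) ℝ :=
  Matrix.det (Matrix.of fun i j : Fin (2 ^ (n+1)) =>
    (((HmatP p n) ^ (j : ℕ)).mulVec (fun k => MvPolynomial.C (phiVec (n+1) k))) i)

lemma krylov_eval (p : ℕ → ℝ) (n : ℕ) (v : ℕ → ℝ) :
    MvPolynomial.eval (fun i : Fin (2 ^ (n+1)) => v (i : ℕ)) (krylovPoly p n)
      = Matrix.det (Matrix.of fun i j : Fin (2 ^ (n+1)) =>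
          (((HmatT p v (n+1) n) ^ (j : ℕ)).mulVec (phiVec (n+1))) i) := by
  classical
  set g := (MvPolynomial.eval (fun i : Fin (2 ^ (n+1)) => v (i : ℕ)) :
    MvPolynomial (Fin (2 ^ (n+1))) ℝ →+* ℝ) with hg
  rw [krylovPoly, RingHom.map_det]
  congr 1
  ext i j
  simp only [RingHom.mapMatrix_apply, Matrix.map_apply, Matrix.of_apply]
  rw [aux_map_pow_mulVec]
  have h1 : (HmatP p n).map g = HmatT p v (n+1) n := by
    ext a b
    by_cases hab : a = b <;>
      simp [HmatP, HmatT, Matrix.map_apply, hab, hg]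
  have h2 : (fun k : Fin (2 ^ (n+1)) => g (MvPolynomial.C (phiVec (n+1) k))) = phiVec (n+1) := by
    funext k
    simp [hg]
  rw [h1, h2]

lemma krylov_ne_zero (p : ℕ → ℝ) (n : ℕ) : krylovPoly p n ≠ 0 := by
  classical
  set w : Fin (2 ^ (n+1)) → ℝ := fun i => ((i : ℕ) : ℝ) with hw
  set ψ := (MvPolynomial.eval₂Hom (Polynomial.C : ℝ →+* Polynomial ℝ)
      (fun i : Fin (2 ^ (n+1)) => Polynomial.C (w i) * Polynomial.X)) with hψ
  set Ht : Matrix (Fin (2 ^ (n+1))) (Fin (2 ^ (n+1))) (Polynomial ℝ) := fun a b =>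
    Polynomial.C (lapEntryT p n (a : ℕ) (b : ℕ)) +
      if a = b then Polynomial.C (w a) * Polynomial.X else 0 with hHt
  have hmap : (HmatP p n).map ψ = Ht := by
    ext a b
    by_cases hab : a = b <;>
      simp [HmatP, hHt, Matrix.map_apply, hab, hψ]
  set φ := phiVec (n+1) with hφ
  have hφne : ∀ i : Fin (2 ^ (n+1)), φ i ≠ 0 := by
    intro i
    have hpos : (0:ℝ) < Real.sqrt (2 ^ (n+1)) := Real.sqrt_pos.mpr (by positivity)
    simpa [hφ, phiVec] using inv_ne_zero hpos.ne'
  have key : ∀ (j : ℕ) (i : Fin (2 ^ (n+1))),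
      ((Ht ^ j).mulVec (fun k => Polynomial.C (φ k)) i).natDegree ≤ j ∧
      ((Ht ^ j).mulVec (fun k => Polynomial.C (φ k)) i).coeff j = w i ^ j * φ i := by
    intro j
    induction j with
    | zero =>
      intro i
      constructor
      · simp [Matrix.one_mulVec]
      · simp [Matrix.one_mulVec]
    | succ j ih =>
      intro i
      have hcol : (Ht ^ (j+1)).mulVec (fun k => Polynomial.C (φ k)) i
          = ∑ k : Fin (2 ^ (n+1)), Ht i k * ((Ht ^ j).mulVec (fun k => Polynomial.C (φ k)) k) := by
        rw [pow_succ' Ht j, ← Matrix.mulVec_mulVec]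
        simp [Matrix.mulVec, dotProduct]
      constructor
      · rw [hcol]
        refine Polynomial.natDegree_sum_le_of_forall_le _ _ fun k _ => ?_
        refine (Polynomial.natDegree_mul_le).trans ?_
        have h1 : (Ht i k).natDegree ≤ 1 := by
          by_cases hik : i = k
          · simp only [hHt, if_pos hik]
            refine (Polynomial.natDegree_add_le _ _).trans ?_
            have h2 : (Polynomial.C (w i) * Polynomial.X : Polynomial ℝ).natDegree ≤ 1 := by
              refine (Polynomial.natDegree_mul_le).trans ?_
              simp [Polynomial.natDegree_X_le]
            simp only [Polynomial.natDegree_C]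
            omega
          · simp [hHt, if_neg hik]
        have h2 := (ih k).1
        omega
      · rw [hcol, Polynomial.finset_sum_coeff]
        rw [Finset.sum_eq_single i]
        · have hii : Ht i i = Polynomial.C (lapEntryT p n (i : ℕ) (i : ℕ)) +
              Polynomial.C (w i) * Polynomial.X := by
            simp [hHt]
          rw [hii, add_mul, Polynomial.coeff_add, mul_assoc, Polynomial.coeff_C_mul,
            Polynomial.coeff_C_mul]
          have h0 : ((Ht ^ j).mulVec (fun k => Polynomial.C (φ k)) i).coeff (j+1) = 0 :=
            Polynomial.coeff_eq_zero_of_natDegree_lt (lt_of_le_of_lt (ih i).1 (Nat.lt_succ_self j))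
          rw [h0, Polynomial.coeff_X_mul, (ih i).2]
          ring
        · intro k _ hk
          have hik : ¬ (i = k) := fun h => hk h.symm
          have hik2 : Ht i k = Polynomial.C (lapEntryT p n (i : ℕ) (k : ℕ)) := by
            simp [hHt, hik]
          rw [hik2, Polynomial.coeff_C_mul,
            Polynomial.coeff_eq_zero_of_natDegree_lt (lt_of_le_of_lt (ih k).1 (Nat.lt_succ_self j)),
            mul_zero]
        · intro h
          exact absurd (Finset.mem_univ i) h
  set A : Matrix (Fin (2 ^ (n+1))) (Fin (2 ^ (n+1))) ℝ :=
    Matrix.diagonal φ * Matrix.vandermonde w with hA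
  have hAentry : ∀ i j : Fin (2 ^ (n+1)), A i j = w i ^ (j : ℕ) * φ i := by
    intro i j
    rw [hA, Matrix.diagonal_mul, Matrix.vandermonde_apply, mul_comm]
  have hdetA : A.det ≠ 0 := by
    rw [hA, Matrix.det_mul, Matrix.det_diagonal, Matrix.det_vandermonde]
    apply mul_ne_zero
    · exact Finset.prod_ne_zero_iff.mpr fun i _ => hφne i
    · refine Finset.prod_ne_zero_iff.mpr fun i _ => Finset.prod_ne_zero_iff.mpr fun j hj => ?_
      have h1 : i < j := Finset.mem_Ioi.mp hj
      have h2 : w i < w j := by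
        simp only [hw]
        exact_mod_cast (Fin.lt_iff_val_lt_val.mp h1)
      exact sub_ne_zero.mpr h2.ne'
  have hψK : ψ (krylovPoly p n) = Matrix.det (Matrix.of fun i j : Fin (2 ^ (n+1)) =>
      (Ht ^ (j : ℕ)).mulVec (fun k => Polynomial.C (φ k)) i) := by
    rw [krylovPoly, RingHom.map_det]
    congr 1
    ext i j
    simp only [RingHom.mapMatrix_apply, Matrix.map_apply, Matrix.of_apply]
    rw [aux_map_pow_mulVec, hmap]
    have hvec : (fun k : Fin (2 ^ (n+1)) => ψ (MvPolynomial.C (phiVec (n+1) k)))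
        = fun k : Fin (2 ^ (n+1)) => Polynomial.C (φ k) := by
      funext k
      simp [hψ, hφ]
    rw [hvec]
  have hcoeff : (ψ (krylovPoly p n)).coeff (∑ j : Fin (2 ^ (n+1)), (j : ℕ)) = A.det := by
    rw [hψK, Matrix.det_apply, Polynomial.finset_sum_coeff, Matrix.det_apply (M := A)]
    refine Finset.sum_congr rfl fun σ _ => ?_
    rw [Polynomial.coeff_smul]
    congr 1
    simp only [Matrix.of_apply]
    rw [aux_coeff_prod Finset.univ _ (fun j : Fin (2 ^ (n+1)) => (j : ℕ))
      (fun j _ => (key (j : ℕ) (σ j)).1)]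
    exact Finset.prod_congr rfl fun j _ => by
      rw [(key (j : ℕ) (σ j)).2, hAentry]
  intro h0
  apply hdetA
  rw [← hcoeff, h0, map_zero, Polynomial.coeff_zero]

lemma span_top_of_krylov_det_ne_zero {N : ℕ} (H : Matrix (Fin N) (Fin N) ℝ) (φ : Fin N → ℝ)
    (h : Matrix.det (Matrix.of fun i j : Fin N => ((H ^ (j : ℕ)).mulVec φ) i) ≠ 0) :
    Submodule.span ℝ (Set.range fun j : ℕ => (H ^ j).mulVec φ) = ⊤ := by
  classical
  set K := Matrix.of fun i j : Fin N => ((H ^ (j : ℕ)).mulVec φ) i with hK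
  rw [eq_top_iff]
  rintro y -
  have hKu : IsUnit K.det := isUnit_iff_ne_zero.mpr h
  have hy : y = ∑ j : Fin N, (K⁻¹.mulVec y) j • (H ^ (j : ℕ)).mulVec φ := by
    have h1 : K.mulVec (K⁻¹.mulVec y) = y := by
      rw [Matrix.mulVec_mulVec, Matrix.mul_nonsing_inv _ hKu, Matrix.one_mulVec]
    conv_lhs => rw [← h1]
    funext i
    simp [Matrix.mulVec, dotProduct, hK, Finset.sum_apply, mul_comm]
  rw [hy]
  exact Submodule.sum_mem _ fun j _ =>
    Submodule.smul_mem _ _ (Submodule.subset_span ⟨(j : ℕ), rfl⟩)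

end AuxCyclic

/-- **Cyclicity of `φ_n`** (Lemma, part i): for every `n ≥ 1` (written `n+1` here), the
vector `φ_{n+1} = 2^{-(n+1)/2} 1_{B_{n+1}}` is almost surely cyclic for `H_{n+1,n}`. -/
theorem phi_cyclic
    {Ω : Type*} [MeasurableSpace Ω] (Pr : Measure Ω) [IsProbabilityMeasure Pr]
    (p : ℕ → ℝ) (hps : Summable p)
    (V : ℕ → Ω → ℝ) (hVmeas : ∀ k, Measurable (V k))
    (hViid : iIndepFun V Pr)
    (ρ : ℝ → ℝ) (hρpos : ∀ v, 0 ≤ ρ v)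
    (hρ : ∀ k, Measure.map (V k) Pr = volume.withDensity fun v => ENNReal.ofReal (ρ v))
    (hρbd : ∃ M : ℝ, ∀ v, ρ v ≤ M)
    (n : ℕ) :
    ∀ᵐ ω ∂Pr,
      Submodule.span ℝ
        (Set.range fun j : ℕ =>
          ((HmatT p (fun i => V i ω) (n + 1) n) ^ j).mulVec (phiVec (n + 1))) = ⊤ := by
  classical
  set W : Ω → (Fin (2 ^ (n+1)) → ℝ) := fun ω i => V (i : ℕ) ω with hWdef
  have hWmeas : Measurable W := measurable_pi_lambda _ fun i => hVmeas i
  set μi : Fin (2 ^ (n+1)) → Measure ℝ := fun i => Measure.map (V (i : ℕ)) Pr with hμi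
  haveI hprob : ∀ i, IsProbabilityMeasure (μi i) := fun i =>
    Measure.isProbabilityMeasure_map (hVmeas _).aemeasurable
  have hatom : ∀ (i : Fin (2 ^ (n+1))) (a : ℝ), μi i {a} = 0 := by
    intro i a
    simp only [hμi]
    rw [hρ (i : ℕ)]
    exact MeasureTheory.withDensity_absolutelyContinuous volume _ (measure_singleton a)
  have hjoint : Measure.pi μi = Measure.map W Pr := by
    refine Measure.pi_eq fun s hs => ?_
    rw [Measure.map_apply hWmeas (MeasurableSet.univ_pi hs)]
    set sets : ℕ → Set ℝ := fun k => if h : k < 2 ^ (n+1) then s ⟨k, h⟩ else Set.univ with hsets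
    have hpre : W ⁻¹' (Set.univ.pi s) = ⋂ k ∈ Finset.range (2 ^ (n+1)), V k ⁻¹' sets k := by
      ext ω
      simp only [Set.mem_preimage, Set.mem_pi, Set.mem_univ, forall_true_left,
        Set.mem_iInter, Finset.mem_range]
      constructor
      · intro hmem k hk
        simp only [hsets, Set.mem_preimage, dif_pos hk]
        exact hmem ⟨k, hk⟩
      · intro hmem i
        have h1 := hmem (i : ℕ) i.isLt
        simpa [hsets, dif_pos i.isLt] using h1
    have hmeas2 : ∀ k ∈ Finset.range (2 ^ (n+1)), MeasurableSet (sets k) := by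
      intro k _
      by_cases hk : k < 2 ^ (n+1)
      · simpa [hsets, dif_pos hk] using hs ⟨k, hk⟩
      · simp [hsets, dif_neg hk]
    rw [hpre, hViid.measure_inter_preimage_eq_mul (Finset.range (2 ^ (n+1))) hmeas2,
      ← Fin.prod_univ_eq_prod_range (fun k => Pr (V k ⁻¹' sets k)) (2 ^ (n+1))]
    refine Finset.prod_congr rfl fun i _ => ?_
    simp only [hμi]
    rw [Measure.map_apply (hVmeas _) (hs i)]
    congr 1
    simp [hsets, dif_pos i.isLt]
  have hQne := krylov_ne_zero p n
  have hZmeas : MeasurableSet {x : Fin (2 ^ (n+1)) → ℝ |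
      MvPolynomial.eval x (krylovPoly p n) = 0} :=
    (MvPolynomial.continuous_eval _).measurable (measurableSet_singleton 0)
  have hnull : Pr {ω | MvPolynomial.eval (W ω) (krylovPoly p n) = 0} = 0 := by
    have hset : {ω | MvPolynomial.eval (W ω) (krylovPoly p n) = 0}
        = W ⁻¹' {x | MvPolynomial.eval x (krylovPoly p n) = 0} := rfl
    rw [hset, ← Measure.map_apply hWmeas hZmeas, ← hjoint]
    exact aux_poly_null _ μi hprob hatom _ hQne
  have hae : ∀ᵐ ω ∂Pr, ¬ (MvPolynomial.eval (W ω) (krylovPoly p n) = 0) := by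
    rw [ae_iff]
    simpa using hnull
  filter_upwards [hae] with ω hω
  have hev := krylov_eval p n (fun k => V k ω)
  have hdet : Matrix.det (Matrix.of fun i j : Fin (2 ^ (n+1)) =>
      (((HmatT p (fun i => V i ω) (n+1) n) ^ (j : ℕ)).mulVec (phiVec (n+1))) i) ≠ 0 := by
    rw [← hev]
    exact hω
  exact span_top_of_krylov_det_ne_zero _ _ hdet
end
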